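/- arXiv:1812.02479 — 3 statements merged into one kernel-verified Lean document; each statement's English description precedes it below -/
import Mathlib

section
/- Let f ∈ L¹([−π,π]) with f = f_R + i·f_I, where f_R and f_I are real-valued and f_R is essentially positive, let A_n(f) ∈ ℝ^{n×n} be the Toeplitz matrix generated by f, A_R = A_n(f_R), Y_n the n×n exchange matrix, and E_n = A_R^{-1/2} A_n(f) A_R^{-1/2} − I_n. If the eigenvalues of the symmetric skew-centrosymmetric matrix Y_n E_n are λ₁, ..., λ_{m₁}, −λ₁, ..., −λ_{m₁} (with all λ_k > 0) together with n − 2m₁ zero eigenvalues, then the eigenvalues of A_R^{-1/2} (Y_n A_n(f)) A_R^{-1/2} are exactly ±√(1 + λ_k²) for k = 1, ..., m₁, together with n − 2m₁ eigenvalues each equal to 1 or −1. -/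
open MeasureTheory Matrix Filter

/-- The `k`-th Fourier coefficient of `f : [-π,π] → ℂ`. -/
noncomputable def fCoeff (f : ℝ → ℂ) (k : ℤ) : ℂ :=
  (1 / (2 * Real.pi)) * ∫ θ in (-Real.pi)..Real.pi, f θ * Complex.exp (-Complex.I * k * θ)

/-- The `n × n` Toeplitz matrix generated by `f`, with entries `a_{j-k}`. -/
noncomputable def toeplitzC (n : ℕ) (f : ℝ → ℂ) : Matrix (Fin n) (Fin n) ℂ :=
  Matrix.of fun j k => fCoeff f ((j : ℤ) - (k : ℤ))

/-- The `n × n` exchange matrix, with ones on the main anti-diagonal. -/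
def exchange (n : ℕ) : Matrix (Fin n) (Fin n) ℝ :=
  Matrix.of fun j k => if (j : ℕ) + (k : ℕ) + 1 = n then 1 else 0

section ExchangeLemmas

variable {n : ℕ}

lemma exchange_cond (j p : Fin n) : ((j : ℕ) + (p : ℕ) + 1 = n) ↔ p = Fin.rev j := by
  rw [Fin.ext_iff, Fin.val_rev]; omega

lemma exchange_mul (B : Matrix (Fin n) (Fin n) ℝ) :
    exchange n * B = Matrix.of (fun j k => B (Fin.rev j) k) := by
  ext j k
  rw [Matrix.mul_apply, Finset.sum_eq_single (Fin.rev j)]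
  · have h : (j : ℕ) + (Fin.rev j : ℕ) + 1 = n := (exchange_cond j (Fin.rev j)).mpr rfl
    simp only [exchange, Matrix.of_apply, if_pos h, one_mul]
  · intro p _ hp
    simp only [exchange, Matrix.of_apply, if_neg ((exchange_cond j p).not.mpr hp), zero_mul]
  · simp

lemma mul_exchange (B : Matrix (Fin n) (Fin n) ℝ) :
    B * exchange n = Matrix.of (fun j k => B j (Fin.rev k)) := by
  ext j k
  rw [Matrix.mul_apply, Finset.sum_eq_single (Fin.rev k)]
  · have h : ((Fin.rev k : ℕ) + (k : ℕ) + 1 = n) := by rw [Fin.val_rev]; have := k.isLt; omega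
    simp only [exchange, Matrix.of_apply, if_pos h, mul_one]
  · intro p _ hp
    have h2 : ¬ ((p : ℕ) + (k : ℕ) + 1 = n) := by
      intro h; apply hp; apply Fin.ext; rw [Fin.val_rev]; omega
    simp only [exchange, Matrix.of_apply, if_neg h2, mul_zero]
  · simp

lemma exchange_mul_exchange : exchange n * exchange n = 1 := by
  rw [exchange_mul]
  ext j k
  simp only [Matrix.of_apply, exchange, Matrix.one_apply, Fin.val_rev]
  have hj := j.isLt; have hk := k.isLt
  rw [if_congr (show ((n - ((j:ℕ)+1) : ℕ) + (k:ℕ) + 1 = n) ↔ (j = k) by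
    rw [Fin.ext_iff]; omega) rfl rfl]

lemma exchange_transpose : (exchange n)ᵀ = exchange n := by
  ext j k; simp only [Matrix.transpose_apply, exchange, Matrix.of_apply]
  rw [if_congr (show ((k:ℕ) + (j:ℕ) + 1 = n) ↔ ((j:ℕ) + (k:ℕ) + 1 = n) by omega) rfl rfl]

end ExchangeLemmas

section SpectralCounting

variable {m : ℕ} {B : Matrix (Fin m) (Fin m) ℝ}

lemma star_det_isUnit (U : Matrix.unitaryGroup (Fin m) ℝ) :
    IsUnit (star (U : Matrix (Fin m) (Fin m) ℝ)).det := by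
  rw [← Unitary.coe_star]
  exact Matrix.UnitaryGroup.det_isUnit (star U)

lemma finrank_ker_unitary_diag (U : Matrix.unitaryGroup (Fin m) ℝ) (d : Fin m → ℝ) :
    Module.finrank ℝ (LinearMap.ker ((U : Matrix (Fin m) (Fin m) ℝ) * Matrix.diagonal d *
        (star (U : Matrix (Fin m) (Fin m) ℝ))).mulVecLin)
      = (Finset.univ.filter (fun i => d i = 0)).card := by
  classical
  set C : Matrix (Fin m) (Fin m) ℝ :=
    (U : Matrix (Fin m) (Fin m) ℝ) * Matrix.diagonal d * (star (U : Matrix (Fin m) (Fin m) ℝ))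
  have hrank : C.rank = (Matrix.diagonal d).rank := by
    rw [show C = (U : Matrix (Fin m) (Fin m) ℝ) * (Matrix.diagonal d *
      (star (U : Matrix (Fin m) (Fin m) ℝ))) by simp [C, Matrix.mul_assoc]]
    rw [Matrix.rank_mul_eq_right_of_isUnit_det _ _ (Matrix.UnitaryGroup.det_isUnit U)]
    rw [Matrix.rank_mul_eq_left_of_isUnit_det _ _ (star_det_isUnit U)]
  have hdiag : (Matrix.diagonal d).rank = Fintype.card {i // d i ≠ 0} := Matrix.rank_diagonal d
  have hrn : C.rank + Module.finrank ℝ (LinearMap.ker C.mulVecLin) = m := by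
    have := LinearMap.finrank_range_add_finrank_ker C.mulVecLin
    rwa [Module.finrank_pi, Fintype.card_fin] at this
  have hcard : Fintype.card {i // d i ≠ 0} + (Finset.univ.filter (fun i => d i = 0)).card = m := by
    rw [Fintype.card_subtype]
    have := Finset.card_filter_add_card_filter_not (s := Finset.univ (α := Fin m))
      (fun i => d i ≠ 0)
    simpa [Finset.card_univ, not_not] using this
  omega

lemma real_spectral (h : B.IsHermitian) :
    B = (h.eigenvectorUnitary : Matrix (Fin m) (Fin m) ℝ) * Matrix.diagonal h.eigenvalues *
      star (h.eigenvectorUnitary : Matrix (Fin m) (Fin m) ℝ) := by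
  simpa [RCLike.ofReal_real_eq_id] using h.spectral_theorem

lemma decomp_sub (h : B.IsHermitian) (μ : ℝ) :
    B - μ • 1 = (h.eigenvectorUnitary : Matrix (Fin m) (Fin m) ℝ) *
      Matrix.diagonal (fun i => h.eigenvalues i - μ) *
      star (h.eigenvectorUnitary : Matrix (Fin m) (Fin m) ℝ) := by
  have hU : (h.eigenvectorUnitary : Matrix (Fin m) (Fin m) ℝ) *
      star (h.eigenvectorUnitary : Matrix (Fin m) (Fin m) ℝ) = 1 :=
    (Matrix.mem_unitaryGroup_iff).mp h.eigenvectorUnitary.2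
  have hD : Matrix.diagonal (fun i => h.eigenvalues i - μ)
      = Matrix.diagonal h.eigenvalues - μ • (1 : Matrix (Fin m) (Fin m) ℝ) := by
    rw [Matrix.smul_one_eq_diagonal, ← Matrix.diagonal_sub]
  rw [hD, Matrix.mul_sub, Matrix.sub_mul, ← real_spectral h]
  congr 1
  rw [Matrix.mul_smul, Matrix.smul_mul, Matrix.mul_one, hU]

lemma decomp_sq_sub (h : B.IsHermitian) (c : ℝ) :
    B * B - c • 1 = (h.eigenvectorUnitary : Matrix (Fin m) (Fin m) ℝ) *
      Matrix.diagonal (fun i => h.eigenvalues i ^ 2 - c) *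
      star (h.eigenvectorUnitary : Matrix (Fin m) (Fin m) ℝ) := by
  have hU' : star (h.eigenvectorUnitary : Matrix (Fin m) (Fin m) ℝ) *
      (h.eigenvectorUnitary : Matrix (Fin m) (Fin m) ℝ) = 1 :=
    (Matrix.mem_unitaryGroup_iff').mp h.eigenvectorUnitary.2
  have hU : (h.eigenvectorUnitary : Matrix (Fin m) (Fin m) ℝ) *
      star (h.eigenvectorUnitary : Matrix (Fin m) (Fin m) ℝ) = 1 :=
    (Matrix.mem_unitaryGroup_iff).mp h.eigenvectorUnitary.2
  have hBB : B * B = (h.eigenvectorUnitary : Matrix (Fin m) (Fin m) ℝ) *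
      Matrix.diagonal (fun i => h.eigenvalues i ^ 2) *
      star (h.eigenvectorUnitary : Matrix (Fin m) (Fin m) ℝ) := by
    conv_lhs => rw [real_spectral h]
    simp only [Matrix.mul_assoc]
    rw [← Matrix.mul_assoc (star (h.eigenvectorUnitary : Matrix (Fin m) (Fin m) ℝ))
      (h.eigenvectorUnitary : Matrix (Fin m) (Fin m) ℝ), hU', Matrix.one_mul,
      ← Matrix.mul_assoc (Matrix.diagonal h.eigenvalues) (Matrix.diagonal h.eigenvalues)
        (star (h.eigenvectorUnitary : Matrix (Fin m) (Fin m) ℝ)),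
      Matrix.diagonal_mul_diagonal, ← Matrix.mul_assoc, ← Matrix.mul_assoc]
    congr 2
    ext i
    simp [pow_two]
  have hD : Matrix.diagonal (fun i => h.eigenvalues i ^ 2 - c)
      = Matrix.diagonal (fun i => h.eigenvalues i ^ 2) - c • (1 : Matrix (Fin m) (Fin m) ℝ) := by
    rw [Matrix.smul_one_eq_diagonal, ← Matrix.diagonal_sub]
  rw [hD, Matrix.mul_sub, Matrix.sub_mul, ← hBB]
  congr 1
  rw [Matrix.mul_smul, Matrix.smul_mul, Matrix.mul_one, hU]

lemma count_eig (h : B.IsHermitian) (μ : ℝ) :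
    Multiset.count μ (Multiset.map h.eigenvalues Finset.univ.val)
      = Module.finrank ℝ (LinearMap.ker (B - μ • 1).mulVecLin) := by
  classical
  rw [decomp_sub h μ, finrank_ker_unitary_diag]
  rw [Multiset.count_map]
  have hset : (Finset.univ.filter (fun i => h.eigenvalues i - μ = 0))
      = Finset.univ.filter (fun i => μ = h.eigenvalues i) := by
    ext i
    simp only [Finset.mem_filter, Finset.mem_univ, true_and]
    constructor <;> intro h' <;> linarith
  rw [hset]
  rfl

lemma finrank_ker_sq (h : B.IsHermitian) (c : ℝ) :
    Module.finrank ℝ (LinearMap.ker (B * B - c • 1).mulVecLin)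
      = (Finset.univ.filter (fun i => h.eigenvalues i ^ 2 = c)).card := by
  classical
  rw [decomp_sq_sub h c, finrank_ker_unitary_diag]
  congr 1
  ext i
  simp only [Finset.mem_filter, Finset.mem_univ, true_and, sub_eq_zero]

lemma factor_sq (P : Matrix (Fin m) (Fin m) ℝ) (μ : ℝ) :
    (P + μ • 1) * (P - μ • 1) = P * P - (μ^2) • 1 := by
  simp only [Matrix.mul_sub, Matrix.add_mul, Matrix.mul_smul, Matrix.smul_mul, Matrix.mul_one,
    Matrix.one_mul, smul_smul, smul_add, smul_sub, pow_two]
  abel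

lemma factor_sq' (P : Matrix (Fin m) (Fin m) ℝ) (μ : ℝ) :
    (P - μ • 1) * (P + μ • 1) = P * P - (μ^2) • 1 := by
  simp only [Matrix.sub_mul, Matrix.mul_add, Matrix.mul_smul, Matrix.smul_mul, Matrix.mul_one,
    Matrix.one_mul, smul_smul, smul_add, smul_sub, pow_two]
  abel

lemma mem_ker_iff (P : Matrix (Fin m) (Fin m) ℝ) (v : Fin m → ℝ) :
    v ∈ LinearMap.ker P.mulVecLin ↔ P *ᵥ v = 0 := by
  simp [LinearMap.mem_ker]

lemma ker_le_sq (P : Matrix (Fin m) (Fin m) ℝ) (μ : ℝ) :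
    LinearMap.ker (P - μ • 1).mulVecLin ≤ LinearMap.ker (P * P - (μ^2) • 1).mulVecLin := by
  intro v hv
  rw [mem_ker_iff] at hv ⊢
  rw [← factor_sq P μ, ← Matrix.mulVec_mulVec, hv, Matrix.mulVec_zero]

lemma finrank_ker_pair (P : Matrix (Fin m) (Fin m) ℝ) (μ : ℝ) (hμ : μ ≠ 0) :
    Module.finrank ℝ (LinearMap.ker (P - μ • 1).mulVecLin)
      + Module.finrank ℝ (LinearMap.ker (P + μ • 1).mulVecLin)
      = Module.finrank ℝ (LinearMap.ker (P * P - (μ^2) • 1).mulVecLin) := by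
  classical
  set F := LinearMap.ker (P - μ • 1).mulVecLin with hF
  set G := LinearMap.ker (P + μ • 1).mulVecLin with hG
  set W := LinearMap.ker (P * P - (μ^2) • 1).mulVecLin with hW
  have hFW : F ≤ W := ker_le_sq P μ
  have hGW : G ≤ W := by
    intro v hv
    rw [mem_ker_iff] at hv ⊢
    rw [← factor_sq' P μ, ← Matrix.mulVec_mulVec, hv, Matrix.mulVec_zero]
  have hFG : F ⊓ G = ⊥ := by
    rw [Submodule.eq_bot_iff]
    intro v hv
    obtain ⟨h1, h2⟩ := Submodule.mem_inf.mp hv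
    rw [mem_ker_iff, Matrix.sub_mulVec, Matrix.smul_mulVec, Matrix.one_mulVec,
      sub_eq_zero] at h1
    rw [mem_ker_iff, Matrix.add_mulVec, Matrix.smul_mulVec, Matrix.one_mulVec,
      add_eq_zero_iff_eq_neg] at h2
    have heq : μ • v = - (μ • v) := h1 ▸ h2
    have h4 : μ • v + μ • v = 0 := by
      nth_rewrite 1 [heq]
      exact neg_add_cancel _
    have h3 : μ • v = 0 := by
      rcases smul_eq_zero.mp (show (2:ℝ) • (μ • v) = 0 by rw [two_smul]; exact h4) with h | h
      · norm_num at h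
      · exact h
    rcases smul_eq_zero.mp h3 with h | h
    · exact absurd h hμ
    · exact h
  have hsup : F ⊔ G = W := by
    refine le_antisymm (sup_le hFW hGW) ?_
    intro v hv
    rw [mem_ker_iff] at hv
    have hw1 : (1/(2*μ)) • ((P + μ • 1) *ᵥ v) ∈ F := by
      rw [mem_ker_iff, Matrix.mulVec_smul, Matrix.mulVec_mulVec, factor_sq' P μ, hv, smul_zero]
    have hw2 : (-(1/(2*μ))) • ((P - μ • 1) *ᵥ v) ∈ G := by
      rw [mem_ker_iff, Matrix.mulVec_smul, Matrix.mulVec_mulVec, factor_sq P μ, hv, smul_zero]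
    have hsum : v = (1/(2*μ)) • ((P + μ • 1) *ᵥ v) + (-(1/(2*μ))) • ((P - μ • 1) *ᵥ v) := by
      rw [Matrix.add_mulVec, Matrix.sub_mulVec, Matrix.smul_mulVec, Matrix.one_mulVec]
      match_scalars <;> (field_simp; try ring)
    rw [hsum]
    exact Submodule.add_mem_sup hw1 hw2
  have := Submodule.finrank_sup_add_finrank_inf_eq F G
  rw [hFG, hsup] at this
  simpa using this.symm

lemma finrank_ker_le_pair (Y N : Matrix (Fin m) (Fin m) ℝ) (hYY : Y * Y = 1)
    (hcomm : N * Y + Y * N = (2:ℝ) • (1 : Matrix (Fin m) (Fin m) ℝ)) (μ : ℝ) (hμ : μ^2 ≠ 1) :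
    Module.finrank ℝ (LinearMap.ker (N - μ • 1).mulVecLin)
      ≤ Module.finrank ℝ (LinearMap.ker (N + μ • 1).mulVecLin) := by
  classical
  set F := LinearMap.ker (N - μ • 1).mulVecLin
  set G := LinearMap.ker (N + μ • 1).mulVecLin
  set φ : (Fin m → ℝ) →ₗ[ℝ] (Fin m → ℝ) := μ • Y.mulVecLin - LinearMap.id with hφ
  have hphi : ∀ v, φ v = μ • (Y *ᵥ v) - v := by
    intro v; simp [hφ]
  have hmaps : ∀ v ∈ F, φ v ∈ G := by
    intro v hv
    rw [LinearMap.mem_ker, Matrix.mulVecLin_apply] at hv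
    rw [Matrix.sub_mulVec, Matrix.smul_mulVec, Matrix.one_mulVec, sub_eq_zero] at hv
    have hNY : ∀ w, N *ᵥ (Y *ᵥ w) = (2:ℝ) • w - Y *ᵥ (N *ᵥ w) := by
      intro w
      have := congrArg (fun M => M *ᵥ w) hcomm
      simp only [Matrix.add_mulVec, Matrix.smul_mulVec, Matrix.one_mulVec,
        ← Matrix.mulVec_mulVec] at this
      linear_combination (norm := module) this
    rw [LinearMap.mem_ker, Matrix.mulVecLin_apply, hphi]
    rw [Matrix.add_mulVec, Matrix.smul_mulVec, Matrix.one_mulVec]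
    rw [Matrix.mulVec_sub, Matrix.mulVec_smul, hNY v, hv, Matrix.mulVec_smul]
    module
  have hinj : ∀ v ∈ F, φ v = 0 → v = 0 := by
    intro v hv h0
    rw [hphi, sub_eq_zero] at h0
    have h1 : Y *ᵥ v = μ • v := by
      have := congrArg (fun w => Y *ᵥ w) h0
      simpa [Matrix.mulVec_smul, Matrix.mulVec_mulVec, hYY, Matrix.one_mulVec] using this.symm
    have h2 : v = (μ^2) • v := by
      nth_rewrite 1 [← h0]
      rw [h1, smul_smul, pow_two]
    have h3 : ((μ^2 - 1) : ℝ) • v = 0 := by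
      rw [sub_smul, one_smul, ← h2, sub_self]
    rcases smul_eq_zero.mp h3 with h | h
    · exact absurd (by linarith [sub_eq_zero.mp h] : μ^2 = 1) hμ
    · exact h
  let ψ : F →ₗ[ℝ] G := φ.restrict hmaps
  have hψinj : Function.Injective ψ := by
    rw [← LinearMap.ker_eq_bot, Submodule.eq_bot_iff]
    rintro ⟨v, hv⟩ h0
    have : φ v = 0 := by
      have := congrArg (Subtype.val) h0
      simpa [ψ, LinearMap.restrict_apply] using this
    exact Subtype.ext (hinj v hv this)
  exact LinearMap.finrank_le_finrank_of_injective hψinj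

lemma finrank_ker_eq_pair (Y N : Matrix (Fin m) (Fin m) ℝ) (hYY : Y * Y = 1)
    (hcomm : N * Y + Y * N = (2:ℝ) • (1 : Matrix (Fin m) (Fin m) ℝ)) (μ : ℝ) (hμ : μ^2 ≠ 1) :
    Module.finrank ℝ (LinearMap.ker (N - μ • 1).mulVecLin)
      = Module.finrank ℝ (LinearMap.ker (N + μ • 1).mulVecLin) := by
  refine le_antisymm (finrank_ker_le_pair Y N hYY hcomm μ hμ) ?_
  have h := finrank_ker_le_pair Y N hYY hcomm (-μ) (by rwa [neg_sq])
  rw [show N - (-μ) • (1 : Matrix (Fin m) (Fin m) ℝ) = N + μ • 1 by rw [neg_smul, sub_neg_eq_add],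
    show N + (-μ) • (1 : Matrix (Fin m) (Fin m) ℝ) = N - μ • 1 by rw [neg_smul, ← sub_eq_add_neg]]
    at h
  exact h

end SpectralCounting

lemma count_map_univ {m : ℕ} (g : Fin m → ℝ) (c : ℝ) :
    Multiset.count c (Multiset.map g Finset.univ.val)
      = (Finset.univ.filter (fun i => c = g i)).card := by
  classical
  rw [Multiset.count_map]
  rfl

lemma pos_sq_inj {x y : ℝ} (hx : 0 < x) (hy : 0 < y) (h : x^2 = y^2) : x = y := by
  have h0 : (x - y) * (x + y) = 0 := by ring_nf; linarith
  rcases mul_eq_zero.mp h0 with h' | h'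
  · linarith
  · linarith

set_option maxHeartbeats 2000000 in
/-- The abstract spectral pairing result. -/
lemma main_count {n m₁ : ℕ} (K N Y : Matrix (Fin n) (Fin n) ℝ)
    (hYE : K.IsHermitian) (hM : N.IsHermitian)
    (hYY : Y * Y = 1)
    (hNN : N * N = K * K + 1)
    (hNYc : N * Y + Y * N = (2:ℝ) • (1 : Matrix (Fin n) (Fin n) ℝ))
    (lam : Fin m₁ → ℝ) (hlam : ∀ k, 0 < lam k)
    (hspec : Multiset.map hYE.eigenvalues Finset.univ.val =
      Multiset.map lam Finset.univ.val + Multiset.map (fun k => -lam k) Finset.univ.val +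
        Multiset.replicate (n - 2 * m₁) 0) :
    ∃ s : Multiset ℝ,
      Multiset.card s = n - 2 * m₁ ∧ (∀ x ∈ s, x = 1 ∨ x = -1) ∧
      Multiset.map hM.eigenvalues Finset.univ.val =
        Multiset.map (fun k => Real.sqrt (1 + lam k ^ 2)) Finset.univ.val +
          Multiset.map (fun k => -Real.sqrt (1 + lam k ^ 2)) Finset.univ.val + s := by
  classical
  have halg : ∀ μ : ℝ, N * N - (μ^2) • (1 : Matrix (Fin n) (Fin n) ℝ)
      = K * K - (μ^2 - 1) • 1 := by
    intro μ
    rw [hNN, sub_smul, one_smul]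
    abel
  have hmneg : ∀ μ : ℝ, N - (-μ) • (1 : Matrix (Fin n) (Fin n) ℝ) = N + μ • 1 := by
    intro μ; rw [neg_smul, sub_neg_eq_add]
  have hcountK : ∀ μ : ℝ, Multiset.count μ (Multiset.map hYE.eigenvalues Finset.univ.val) =
      (Finset.univ.filter (fun j => μ = lam j)).card +
      (Finset.univ.filter (fun j => μ = -lam j)).card +
      (if μ = 0 then n - 2*m₁ else 0) := by
    intro μ
    rw [hspec]
    simp only [Multiset.count_add, Multiset.count_replicate]
    rw [count_map_univ, count_map_univ]
    congr 1
    exact if_congr eq_comm rfl rfl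
  have hKmem : ∀ i, hYE.eigenvalues i = 0 ∨ ∃ k, hYE.eigenvalues i = lam k ∨
      hYE.eigenvalues i = -lam k := by
    intro i
    have hmem : hYE.eigenvalues i ∈ Multiset.map hYE.eigenvalues Finset.univ.val :=
      Multiset.mem_map_of_mem _ (Finset.mem_univ_val i)
    rw [hspec] at hmem
    simp only [Multiset.mem_add, Multiset.mem_map] at hmem
    rcases hmem with (⟨k, _, hk⟩ | ⟨k, _, hk⟩) | hk
    · exact Or.inr ⟨k, Or.inl hk.symm⟩
    · exact Or.inr ⟨k, Or.inr hk.symm⟩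
    · exact Or.inl (Multiset.eq_of_mem_replicate hk)
  have hKsq : ∀ c : ℝ, Module.finrank ℝ (LinearMap.ker (K * K - c • 1).mulVecLin)
      = (Finset.univ.filter (fun i => hYE.eigenvalues i ^ 2 = c)).card :=
    fun c => finrank_ker_sq hYE c
  have cntN : ∀ μ : ℝ, Multiset.count μ (Multiset.map hM.eigenvalues Finset.univ.val)
      = Module.finrank ℝ (LinearMap.ker (N - μ • 1).mulVecLin) := fun μ => count_eig hM μ
  have hpairsum : ∀ μ : ℝ, μ ≠ 0 →
      Module.finrank ℝ (LinearMap.ker (N - μ • 1).mulVecLin) +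
      Module.finrank ℝ (LinearMap.ker (N + μ • 1).mulVecLin)
      = (Finset.univ.filter (fun i => hYE.eigenvalues i ^ 2 = μ^2 - 1)).card := by
    intro μ hμ
    rw [finrank_ker_pair N μ hμ, halg μ, hKsq]
  have key1 : Module.finrank ℝ (LinearMap.ker (N - (1:ℝ) • 1).mulVecLin) +
      Module.finrank ℝ (LinearMap.ker (N + (1:ℝ) • 1).mulVecLin) = n - 2 * m₁ := by
    rw [hpairsum 1 one_ne_zero]
    have hzero : (Finset.univ.filter (fun i => hYE.eigenvalues i ^ 2 = (1:ℝ)^2 - 1))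
        = Finset.univ.filter (fun i => (0:ℝ) = hYE.eigenvalues i) := by
      apply Finset.filter_congr
      intro i _
      constructor
      · intro h'
        have h2 : hYE.eigenvalues i ^ 2 = 0 := by rw [h']; norm_num
        exact (pow_eq_zero_iff (n := 2) (by norm_num) |>.mp h2).symm
      · intro h'; rw [← h']; norm_num
    rw [hzero, ← count_map_univ, hcountK 0]
    have e1 : (Finset.univ.filter (fun j => (0:ℝ) = lam j)).card = 0 := by
      rw [Finset.card_eq_zero, Finset.filter_eq_empty_iff]
      intro j _
      exact fun h => absurd h.symm (hlam j).ne'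
    have e2 : (Finset.univ.filter (fun j => (0:ℝ) = -lam j)).card = 0 := by
      rw [Finset.card_eq_zero, Finset.filter_eq_empty_iff]
      intro j _
      intro h
      have := hlam j
      linarith
    rw [e1, e2, if_pos rfl]
    omega
  refine ⟨Multiset.replicate (Module.finrank ℝ (LinearMap.ker (N - (1:ℝ) • 1).mulVecLin)) 1 +
    Multiset.replicate (Module.finrank ℝ (LinearMap.ker (N + (1:ℝ) • 1).mulVecLin)) (-1),
    ?_, ?_, ?_⟩
  · rw [Multiset.card_add, Multiset.card_replicate, Multiset.card_replicate, key1]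
  · intro x hx
    rcases Multiset.mem_add.mp hx with h | h
    · exact Or.inl (Multiset.eq_of_mem_replicate h)
    · exact Or.inr (Multiset.eq_of_mem_replicate h)
  · ext μ
    rw [cntN μ]
    simp only [Multiset.count_add, Multiset.count_replicate]
    rw [count_map_univ, count_map_univ]
    by_cases hμ1 : μ = 1
    · subst hμ1
      have e1 : (Finset.univ.filter (fun k => (1:ℝ) = Real.sqrt (1 + lam k ^ 2))).card = 0 := by
        rw [Finset.card_eq_zero, Finset.filter_eq_empty_iff]
        intro k _
        intro h
        have hs := Real.sq_sqrt (show (0:ℝ) ≤ 1 + lam k ^ 2 by positivity)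
        have h1 : Real.sqrt (1 + lam k ^ 2) = 1 := h.symm
        rw [h1, one_pow] at hs
        nlinarith [hlam k]
      have e2 : (Finset.univ.filter (fun k => (1:ℝ) = -Real.sqrt (1 + lam k ^ 2))).card = 0 := by
        rw [Finset.card_eq_zero, Finset.filter_eq_empty_iff]
        intro k _
        intro h
        have := Real.sqrt_nonneg (1 + lam k ^ 2)
        linarith
      rw [e1, e2, if_pos rfl, if_neg (by norm_num)]
      norm_num
    by_cases hμ2 : μ = -1
    · subst hμ2
      have e1 : (Finset.univ.filter (fun k => (-1:ℝ) = Real.sqrt (1 + lam k ^ 2))).card = 0 := by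
        rw [Finset.card_eq_zero, Finset.filter_eq_empty_iff]
        intro k _
        intro h
        have := Real.sqrt_nonneg (1 + lam k ^ 2)
        linarith
      have e2 : (Finset.univ.filter (fun k => (-1:ℝ) = -Real.sqrt (1 + lam k ^ 2))).card = 0 := by
        rw [Finset.card_eq_zero, Finset.filter_eq_empty_iff]
        intro k _
        intro h
        have hs := Real.sq_sqrt (show (0:ℝ) ≤ 1 + lam k ^ 2 by positivity)
        have h1 : Real.sqrt (1 + lam k ^ 2) = 1 := by linarith
        rw [h1, one_pow] at hs
        nlinarith [hlam k]
      rw [e1, e2, if_neg (by norm_num), if_pos rfl]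
      rw [show N - (-1:ℝ) • (1 : Matrix (Fin n) (Fin n) ℝ) = N + (1:ℝ) • 1 from hmneg 1]
      norm_num
    have hμsq : μ^2 ≠ 1 := by
      rw [pow_two]
      intro hc
      rcases mul_self_eq_one_iff.mp hc with h | h
      · exact hμ1 h
      · exact hμ2 h
    rw [if_neg (show ¬(1:ℝ) = μ from fun h => hμ1 h.symm),
      if_neg (show ¬(-1:ℝ) = μ from fun h => hμ2 h.symm)]
    by_cases hex : ∃ k, μ^2 = 1 + lam k ^ 2
    · obtain ⟨k₀, hk₀⟩ := hex
      have hl0 := hlam k₀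
      have hsq0 : (0:ℝ) ≤ 1 + lam k₀ ^ 2 := by positivity
      have hr2 : Real.sqrt (1 + lam k₀ ^ 2) ^ 2 = 1 + lam k₀ ^ 2 := Real.sq_sqrt hsq0
      have hrpos : 0 < Real.sqrt (1 + lam k₀ ^ 2) := Real.sqrt_pos.mpr (by positivity)
      have hμ0 : μ ≠ 0 := by
        intro h; rw [h] at hk₀; nlinarith
      have hμr : μ = Real.sqrt (1 + lam k₀ ^ 2) ∨ μ = -Real.sqrt (1 + lam k₀ ^ 2) := by
        have hz : (μ - Real.sqrt (1 + lam k₀ ^ 2)) * (μ + Real.sqrt (1 + lam k₀ ^ 2)) = 0 := by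
          nlinarith
        rcases mul_eq_zero.mp hz with h | h
        · left; linarith
        · right; linarith
      have hsqfilter : (Finset.univ.filter (fun i => hYE.eigenvalues i ^ 2 = μ^2 - 1)).card
          = 2 * (Finset.univ.filter (fun j => lam k₀ = lam j)).card := by
        have hstep : (Finset.univ.filter (fun i => hYE.eigenvalues i ^ 2 = μ^2 - 1))
            = Finset.univ.filter (fun i => lam k₀ = hYE.eigenvalues i) ∪
              Finset.univ.filter (fun i => -lam k₀ = hYE.eigenvalues i) := by
          rw [← Finset.filter_or]
          apply Finset.filter_congr
          intro i _
          have hc : μ^2 - 1 = lam k₀ ^ 2 := by linarith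
          rw [hc]
          constructor
          · intro h'
            have hz : (hYE.eigenvalues i - lam k₀) * (hYE.eigenvalues i + lam k₀) = 0 := by
              nlinarith
            rcases mul_eq_zero.mp hz with h | h
            · left; linarith
            · right; linarith
          · intro h'
            rcases h' with h | h
            · rw [← h]
            · rw [← h]; ring
        rw [hstep, Finset.card_union_of_disjoint]
        · have hcc : (Finset.univ.filter (fun i => -lam k₀ = hYE.eigenvalues i)).card
              = (Finset.univ.filter (fun j => lam k₀ = lam j)).card := by
            rw [← count_map_univ, hcountK (-lam k₀)]
            have z2 : (Finset.univ.filter (fun j => -lam k₀ = lam j)).card = 0 := by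
              rw [Finset.card_eq_zero, Finset.filter_eq_empty_iff]
              intro j _; intro h; have := hlam j; linarith
            have z3 : (Finset.univ.filter (fun j => -lam k₀ = -lam j)).card
                = (Finset.univ.filter (fun j => lam k₀ = lam j)).card := by
              apply congrArg
              apply Finset.filter_congr
              intro j _
              constructor
              · intro h; linarith
              · intro h; linarith
            rw [z2, z3, if_neg (by intro h; linarith)]
            omega
          have hc2 : (Finset.univ.filter (fun i => lam k₀ = hYE.eigenvalues i)).card
              = (Finset.univ.filter (fun j => lam k₀ = lam j)).card := by
            rw [← count_map_univ, hcountK (lam k₀)]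
            have z1 : (Finset.univ.filter (fun j => lam k₀ = -lam j)).card = 0 := by
              rw [Finset.card_eq_zero, Finset.filter_eq_empty_iff]
              intro j _; intro h; have := hlam j; linarith
            rw [z1, if_neg (by intro h; linarith)]
            omega
          rw [hcc, hc2]
          ring
        · rw [Finset.disjoint_left]
          intro i hi1 hi2
          simp only [Finset.mem_filter, Finset.mem_univ, true_and] at hi1 hi2
          have hq : lam k₀ = -lam k₀ := hi1.trans hi2.symm
          linarith
      have heqpair : Module.finrank ℝ (LinearMap.ker (N - μ • 1).mulVecLin)
          = Module.finrank ℝ (LinearMap.ker (N + μ • 1).mulVecLin) :=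
        finrank_ker_eq_pair Y N hYY hNYc μ hμsq
      have hTT := hpairsum μ hμ0
      rw [← heqpair, hsqfilter] at hTT
      have hmNT : Module.finrank ℝ (LinearMap.ker (N - μ • 1).mulVecLin)
          = (Finset.univ.filter (fun j => lam k₀ = lam j)).card := by omega
      rw [hmNT]
      rcases hμr with hcase | hcase
      · have e2 : (Finset.univ.filter (fun k => μ = -Real.sqrt (1 + lam k ^ 2))).card = 0 := by
          rw [Finset.card_eq_zero, Finset.filter_eq_empty_iff]
          intro k _
          intro h
          have := Real.sqrt_nonneg (1 + lam k ^ 2)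
          have hs1 : 0 < Real.sqrt (1 + lam k ^ 2) := Real.sqrt_pos.mpr (by positivity)
          rw [hcase] at h
          linarith
        have e1 : (Finset.univ.filter (fun k => μ = Real.sqrt (1 + lam k ^ 2)))
            = Finset.univ.filter (fun j => lam k₀ = lam j) := by
          apply Finset.filter_congr
          intro k _
          rw [hcase]
          constructor
          · intro h
            have hsk : Real.sqrt (1 + lam k ^ 2) ^ 2 = 1 + lam k ^ 2 :=
              Real.sq_sqrt (by positivity)
            have : 1 + lam k₀ ^ 2 = 1 + lam k ^ 2 := by rw [← hr2, h, hsk]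
            exact (pos_sq_inj (hlam k₀) (hlam k) (by linarith)).symm ▸ rfl
          · intro h
            rw [show lam k = lam k₀ from h.symm]
        rw [e1, e2]
        omega
      · have e1 : (Finset.univ.filter (fun k => μ = Real.sqrt (1 + lam k ^ 2))).card = 0 := by
          rw [Finset.card_eq_zero, Finset.filter_eq_empty_iff]
          intro k _
          intro h
          have hs1 : 0 < Real.sqrt (1 + lam k ^ 2) := Real.sqrt_pos.mpr (by positivity)
          rw [hcase] at h
          linarith
        have e2 : (Finset.univ.filter (fun k => μ = -Real.sqrt (1 + lam k ^ 2)))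
            = Finset.univ.filter (fun j => lam k₀ = lam j) := by
          apply Finset.filter_congr
          intro k _
          rw [hcase]
          constructor
          · intro h
            have hsk : Real.sqrt (1 + lam k ^ 2) ^ 2 = 1 + lam k ^ 2 :=
              Real.sq_sqrt (by positivity)
            have h' : Real.sqrt (1 + lam k₀ ^ 2) = Real.sqrt (1 + lam k ^ 2) := by linarith
            have : 1 + lam k₀ ^ 2 = 1 + lam k ^ 2 := by rw [← hr2, h', hsk]
            exact (pos_sq_inj (hlam k₀) (hlam k) (by linarith)).symm ▸ rfl
          · intro h
            rw [show lam k = lam k₀ from h.symm]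
        rw [e1, e2]
        omega
    · have hincl := ker_le_sq N μ
      rw [halg μ] at hincl
      have hzero : (Finset.univ.filter
          (fun i => hYE.eigenvalues i ^ 2 = μ^2 - 1)).card = 0 := by
        rw [Finset.card_eq_zero, Finset.filter_eq_empty_iff]
        intro i _
        intro h
        rcases hKmem i with h0 | ⟨k, hk | hk⟩
        · rw [h0] at h
          exact hμsq (by nlinarith)
        · rw [hk] at h
          exact hex ⟨k, by nlinarith⟩
        · rw [hk] at h
          exact hex ⟨k, by nlinarith⟩
      have hker0 : Module.finrank ℝ (LinearMap.ker (K * K - (μ^2 - 1) • 1).mulVecLin) = 0 := by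
        rw [hKsq, hzero]
      have hle := Submodule.finrank_mono hincl
      rw [hker0] at hle
      have hm0 : Module.finrank ℝ (LinearMap.ker (N - μ • 1).mulVecLin) = 0 :=
        le_antisymm hle (Nat.zero_le _)
      rw [hm0]
      have e1 : (Finset.univ.filter (fun k => μ = Real.sqrt (1 + lam k ^ 2))).card = 0 := by
        rw [Finset.card_eq_zero, Finset.filter_eq_empty_iff]
        intro k _
        intro h
        refine hex ⟨k, ?_⟩
        rw [h]
        exact Real.sq_sqrt (by positivity)
      have e2 : (Finset.univ.filter (fun k => μ = -Real.sqrt (1 + lam k ^ 2))).card = 0 := by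
        rw [Finset.card_eq_zero, Finset.filter_eq_empty_iff]
        intro k _
        intro h
        refine hex ⟨k, ?_⟩
        have hh : μ^2 = Real.sqrt (1 + lam k ^ 2) ^ 2 := by rw [h]; ring
        rw [hh]
        exact Real.sq_sqrt (by positivity)
      rw [e1, e2]

/-- With `A_R = A_n(f_R)`, `Y` the exchange matrix and
`E = A_R^{-1/2} A_n(f) A_R^{-1/2} - I`: if the eigenvalues of the symmetric skew-centrosymmetric
matrix `Y E` are `λ₁, …, λ_{m₁}, -λ₁, …, -λ_{m₁}` (all `λ_k > 0`) together with `n - 2 m₁` zero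
eigenvalues, then the eigenvalues of `A_R^{-1/2} (Y A_n(f)) A_R^{-1/2}` are exactly
`±√(1 + λ_k²)`, `k = 1, …, m₁`, together with `n - 2 m₁` eigenvalues each equal to `1` or `-1`. -/
theorem stmt3 (n m₁ : ℕ) (fR fI : ℝ → ℝ) (f : ℝ → ℂ)
    (hf : ∀ θ, f θ = (fR θ : ℂ) + Complex.I * (fI θ : ℂ))
    (hfint : IntegrableOn f (Set.Icc (-Real.pi) Real.pi))
    (hpos : 0 < essInf fR (volume.restrict (Set.Icc (-Real.pi) Real.pi)))
    (A : Matrix (Fin n) (Fin n) ℝ)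
    (hA : ∀ j k, (A j k : ℂ) = toeplitzC n f j k)
    (AR : Matrix (Fin n) (Fin n) ℝ)
    (hAR : AR = (1 / 2 : ℝ) • (A + Aᵀ))
    (S : Matrix (Fin n) (Fin n) ℝ) (hSsymm : S.IsSymm) (hSpos : S.PosDef) (hSsq : S * S = AR)
    (E : Matrix (Fin n) (Fin n) ℝ) (hE : E = S⁻¹ * A * S⁻¹ - 1)
    (hYE : (exchange n * E).IsHermitian)
    (hM : (S⁻¹ * (exchange n * A) * S⁻¹).IsHermitian)
    (lam : Fin m₁ → ℝ) (hlam : ∀ k, 0 < lam k)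
    (hspec : Multiset.map hYE.eigenvalues Finset.univ.val =
      Multiset.map lam Finset.univ.val + Multiset.map (fun k => -lam k) Finset.univ.val +
        Multiset.replicate (n - 2 * m₁) 0) :
    ∃ s : Multiset ℝ,
      Multiset.card s = n - 2 * m₁ ∧ (∀ x ∈ s, x = 1 ∨ x = -1) ∧
      Multiset.map hM.eigenvalues Finset.univ.val =
        Multiset.map (fun k => Real.sqrt (1 + lam k ^ 2)) Finset.univ.val +
          Multiset.map (fun k => -Real.sqrt (1 + lam k ^ 2)) Finset.univ.val + s := by
  classical
  have hYY : exchange n * exchange n = 1 := exchange_mul_exchange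
  have hYT : (exchange n)ᵀ = exchange n := exchange_transpose
  have hdet : IsUnit S.det := hSpos.det_pos.ne'.isUnit
  have hSiS : S⁻¹ * S = 1 := Matrix.nonsing_inv_mul S hdet
  have hSSi : S * S⁻¹ = 1 := Matrix.mul_nonsing_inv S hdet
  have hYAY : exchange n * A * exchange n = Aᵀ := by
    rw [exchange_mul, mul_exchange]
    ext j k
    show A (Fin.rev j) (Fin.rev k) = A k j
    have h1 := hA (Fin.rev j) (Fin.rev k)
    have h2 := hA k j
    have he : ((Fin.rev j : ℕ) : ℤ) - ((Fin.rev k : ℕ) : ℤ) = ((k:ℕ) : ℤ) - ((j:ℕ) : ℤ) := by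
      rw [Fin.val_rev, Fin.val_rev]
      have := j.isLt; have := k.isLt
      omega
    apply Complex.ofReal_injective
    rw [h1, h2]
    simp only [toeplitzC, Matrix.of_apply, he]
  have hYAtY : exchange n * Aᵀ * exchange n = A := by
    have := congrArg Matrix.transpose hYAY
    rw [Matrix.transpose_mul, Matrix.transpose_mul, hYT, Matrix.transpose_transpose] at this
    rw [← Matrix.mul_assoc] at this
    exact this
  have hYARY : exchange n * AR * exchange n = AR := by
    rw [hAR, Matrix.mul_smul, Matrix.smul_mul, Matrix.mul_add, Matrix.add_mul, hYAY, hYAtY,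
      add_comm]
  have hYSY : exchange n * S * exchange n = S := by
    have hps : (exchange n * S * exchange n).PosSemidef := by
      have := hSpos.posSemidef.mul_mul_conjTranspose_same (exchange n)
      rwa [Matrix.conjTranspose_eq_transpose_of_trivial, hYT] at this
    have hsq : (exchange n * S * exchange n) ^ 2 = S ^ 2 := by
      rw [pow_two, pow_two]
      calc (exchange n * S * exchange n) * (exchange n * S * exchange n)
          = exchange n * S * (exchange n * exchange n) * S * exchange n := by
            simp only [Matrix.mul_assoc]
        _ = exchange n * (S * S) * exchange n := by
            rw [hYY]; simp only [Matrix.mul_assoc, Matrix.one_mul]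
        _ = S * S := by rw [hSsq, hYARY]
    open scoped MatrixOrder in
    exact (CFC.sq_eq_sq_iff _ _ hps.nonneg hSpos.posSemidef.nonneg).mp hsq
  have hYS : exchange n * S = S * exchange n := by
    have := congrArg (fun M => M * exchange n) hYSY
    simpa only [Matrix.mul_assoc, hYY, Matrix.mul_one] using this
  have hYSi : exchange n * S⁻¹ = S⁻¹ * exchange n := by
    calc exchange n * S⁻¹ = S⁻¹ * S * (exchange n * S⁻¹) := by rw [hSiS, Matrix.one_mul]
      _ = S⁻¹ * (S * exchange n) * S⁻¹ := by simp only [Matrix.mul_assoc]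
      _ = S⁻¹ * (exchange n * S) * S⁻¹ := by rw [hYS]
      _ = S⁻¹ * exchange n * (S * S⁻¹) := by simp only [Matrix.mul_assoc]
      _ = S⁻¹ * exchange n := by rw [hSSi, Matrix.mul_one]
  have hSiT : S⁻¹ᵀ = S⁻¹ := by
    rw [Matrix.transpose_nonsing_inv, hSsymm.eq]
  have hAAt : A + Aᵀ = (2:ℝ) • AR := by
    rw [hAR, smul_smul]; norm_num
  have hEskew : Eᵀ = -E := by
    have hEt : Eᵀ = S⁻¹ * Aᵀ * S⁻¹ - 1 := by
      rw [hE, Matrix.transpose_sub, Matrix.transpose_one, Matrix.transpose_mul,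
        Matrix.transpose_mul, hSiT, Matrix.mul_assoc]
    have hsum : E + Eᵀ = 0 := by
      rw [hEt, hE]
      have hme : S⁻¹ * A * S⁻¹ + S⁻¹ * Aᵀ * S⁻¹ = S⁻¹ * (A + Aᵀ) * S⁻¹ := by
        rw [Matrix.mul_add, Matrix.add_mul]
      rw [sub_add_sub_comm, hme, hAAt, ← hSsq, Matrix.mul_smul, Matrix.smul_mul,
        show S⁻¹ * (S * S) * S⁻¹ = (S⁻¹ * S) * (S * S⁻¹) by simp only [Matrix.mul_assoc],
        hSiS, hSSi, Matrix.one_mul, two_smul]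
      exact sub_self _
    exact eq_neg_of_add_eq_zero_right hsum
  have hKsymm : (exchange n * E)ᵀ = exchange n * E := by
    have := hYE.eq
    rwa [Matrix.conjTranspose_eq_transpose_of_trivial] at this
  have hYEe : exchange n * E = -(E * exchange n) := by
    conv_lhs => rw [← hKsymm]
    rw [Matrix.transpose_mul, hYT, hEskew, Matrix.neg_mul]
  have hN : S⁻¹ * (exchange n * A) * S⁻¹ = exchange n * E + exchange n := by
    rw [hE, Matrix.mul_sub, Matrix.mul_one, sub_add_cancel]
    conv_rhs => rw [← Matrix.mul_assoc, ← Matrix.mul_assoc, hYSi]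
    simp only [Matrix.mul_assoc]
  have hKY : (exchange n * E) * exchange n = -(exchange n * (exchange n * E)) := by
    calc (exchange n * E) * exchange n = exchange n * (E * exchange n) :=
        Matrix.mul_assoc _ E _
      _ = -(E * exchange n * exchange n) := by
          rw [← Matrix.mul_assoc, hYEe, Matrix.neg_mul]
      _ = -E := by rw [Matrix.mul_assoc, hYY, Matrix.mul_one]
      _ = -(exchange n * (exchange n * E)) := by rw [← Matrix.mul_assoc, hYY, Matrix.one_mul]
  have hNN : (S⁻¹ * (exchange n * A) * S⁻¹) * (S⁻¹ * (exchange n * A) * S⁻¹)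
      = (exchange n * E) * (exchange n * E) + 1 := by
    rw [hN, Matrix.add_mul, Matrix.mul_add, Matrix.mul_add, hYY, hKY]
    abel
  have hNYc : (S⁻¹ * (exchange n * A) * S⁻¹) * exchange n +
      exchange n * (S⁻¹ * (exchange n * A) * S⁻¹)
      = (2:ℝ) • (1 : Matrix (Fin n) (Fin n) ℝ) := by
    rw [hN, Matrix.add_mul, Matrix.mul_add, hYY, hKY, two_smul]
    abel
  exact main_count (exchange n * E) (S⁻¹ * (exchange n * A) * S⁻¹) (exchange n)
    hYE hM hYY hNN hNYc lam hlam hspec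
end

section
/- Let f ∈ L^∞([−π,π]) with |f(θ)| ≥ δ > 0 for all θ ∈ [−π,π], let A_n(f) ∈ ℝ^{n×n} be the Toeplitz matrix generated by f, let A_M = A_n(|f|), let Y_n be the n×n exchange matrix, and let f̃ = f/|f|. Then A_M^{-1} Y_n A_n(f) = Y_n A_n(f̃) + E_n, where ‖E_n‖₂ = o(n) as n → ∞, and every eigenvalue of the symmetric matrix Y_n A_n(f̃) lies in [−1, 1]. -/
open MeasureTheory Matrix Filter

/-- The `n × n` exchange matrix (over `ℂ`), with ones on the main anti-diagonal. -/
def exchangeC (n : ℕ) : Matrix (Fin n) (Fin n) ℂ :=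
  Matrix.of fun j k => if (j : ℕ) + (k : ℕ) + 1 = n then 1 else 0

open Set Complex Real

namespace Stmt5

/-- trig polynomial attached to a vector -/
noncomputable def tp (n : ℕ) (x : Fin n → ℂ) (θ : ℝ) : ℂ :=
  ∑ j : Fin n, x j * Complex.exp (Complex.I * (j : ℕ) * θ)

/-- squared l2 norm of a vector -/
noncomputable def S {n : ℕ} (x : Fin n → ℂ) : ℝ := ∑ i, ‖x i‖ ^ 2

lemma S_nonneg {n : ℕ} (x : Fin n → ℂ) : 0 ≤ S x :=
  Finset.sum_nonneg fun _ _ => by positivity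

lemma S_eq_zero {n : ℕ} {x : Fin n → ℂ} (h : S x = 0) : x = 0 := by
  funext i
  have := (Finset.sum_eq_zero_iff_of_nonneg (fun i _ => by positivity)).mp h i (Finset.mem_univ i)
  have : ‖x i‖ = 0 := by nlinarith [norm_nonneg (x i)]
  simpa using this

lemma star_dot_self {n : ℕ} (x : Fin n → ℂ) : star x ⬝ᵥ x = (S x : ℂ) := by
  simp only [dotProduct, Pi.star_apply, RCLike.star_def, S]
  push_cast
  exact Finset.sum_congr rfl fun i _ => Complex.conj_mul' (x i)

lemma intervalIntegrable_of_bounded {g : ℝ → ℂ} (hg : Measurable g) {C : ℝ}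
    (hC : ∀ θ ∈ Set.Icc (-Real.pi) Real.pi, ‖g θ‖ ≤ C) :
    IntervalIntegrable g MeasureTheory.volume (-Real.pi) Real.pi := by
  rw [intervalIntegrable_iff_integrableOn_Ioc_of_le (by linarith [Real.pi_pos])]
  refine Measure.integrableOn_of_bounded (M := C) (by simp) hg.aestronglyMeasurable ?_
  rw [ae_restrict_iff' measurableSet_Ioc]
  exact Filter.Eventually.of_forall fun θ hθ => hC θ ⟨le_of_lt hθ.1, hθ.2⟩

lemma cont_exp (c : ℂ) : Continuous fun θ : ℝ => Complex.exp (c * θ) := by fun_prop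

lemma integrable_mul_exp {g : ℝ → ℂ} (hg : IntervalIntegrable g MeasureTheory.volume
    (-Real.pi) Real.pi) (c : ℂ) :
    IntervalIntegrable (fun θ => g θ * Complex.exp (c * θ)) MeasureTheory.volume
      (-Real.pi) Real.pi :=
  hg.mul_continuousOn (cont_exp c).continuousOn



set_option maxHeartbeats 1000000 in
/-- the core bilinear identity -/
lemma dot_toeplitz {n : ℕ} {g : ℝ → ℂ}
    (hg : IntervalIntegrable g MeasureTheory.volume (-Real.pi) Real.pi) (x y : Fin n → ℂ) :
    star x ⬝ᵥ (toeplitzC n g) *ᵥ y =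
      (1 / (2 * Real.pi) : ℂ) *
        ∫ θ in (-Real.pi)..Real.pi,
          g θ * ((starRingEnd ℂ) (tp n x θ) * tp n y θ) := by
  classical
  set c : Fin n × Fin n → ℂ := fun p => (starRingEnd ℂ) (x p.1) * y p.2 with hc
  set e : Fin n × Fin n → ℂ :=
    fun p => -Complex.I * ((((p.1 : ℤ) - (p.2 : ℤ)) : ℤ) : ℂ) with he
  have key : ∀ θ : ℝ, g θ * ((starRingEnd ℂ) (tp n x θ) * tp n y θ) =
      ∑ p : Fin n × Fin n, c p * (g θ * Complex.exp (e p * θ)) := by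
    intro θ
    rw [Fintype.sum_prod_type]
    rw [tp, tp, map_sum, Finset.sum_mul_sum, Finset.mul_sum]
    refine Finset.sum_congr rfl fun j _ => ?_
    rw [Finset.mul_sum]
    refine Finset.sum_congr rfl fun k _ => ?_
    have hout : (starRingEnd ℂ) (x j * Complex.exp (Complex.I * (j : ℕ) * θ)) *
        (y k * Complex.exp (Complex.I * (k : ℕ) * θ)) =
        c (j, k) * Complex.exp (e (j, k) * θ) := by
      rw [_root_.map_mul, ← Complex.exp_conj, mul_mul_mul_comm, ← Complex.exp_add, hc, he]
      have harg : (starRingEnd ℂ) (Complex.I * (j : ℕ) * θ) + Complex.I * (k : ℕ) * θ =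
          -Complex.I * ((((j : ℤ) - (k : ℤ)) : ℤ) : ℂ) * θ := by
        simp only [_root_.map_mul, Complex.conj_I, Complex.conj_natCast, Complex.conj_ofReal]
        push_cast
        ring
      rw [harg]
    rw [hout]
    ring
  have hint : ∀ p : Fin n × Fin n, IntervalIntegrable
      (fun θ : ℝ => c p * (g θ * Complex.exp (e p * θ)))
      MeasureTheory.volume (-Real.pi) Real.pi :=
    fun p => ((integrable_mul_exp hg _)).const_mul _
  have h1 : (∫ θ in (-Real.pi)..Real.pi, g θ * ((starRingEnd ℂ) (tp n x θ) * tp n y θ)) =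
      ∑ p : Fin n × Fin n, c p * ∫ θ in (-Real.pi)..Real.pi, g θ * Complex.exp (e p * θ) := by
    rw [intervalIntegral.integral_congr (g := fun θ => ∑ p : Fin n × Fin n,
        c p * (g θ * Complex.exp (e p * θ))) (fun θ _ => key θ)]
    rw [intervalIntegral.integral_finset_sum (fun p _ => hint p)]
    exact Finset.sum_congr rfl fun p _ => intervalIntegral.integral_const_mul _ _
  have h2 : star x ⬝ᵥ (toeplitzC n g) *ᵥ y =
      ∑ p : Fin n × Fin n, c p * fCoeff g ((p.1 : ℤ) - (p.2 : ℤ)) := by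
    rw [Fintype.sum_prod_type]
    simp only [dotProduct, mulVec, toeplitzC, Matrix.of_apply, Pi.star_apply,
      RCLike.star_def, dotProduct, Finset.mul_sum, hc]
    exact Finset.sum_congr rfl fun j _ => Finset.sum_congr rfl fun k _ => by ring
  rw [h2, h1, Finset.mul_sum]
  refine Finset.sum_congr rfl fun p _ => ?_
  rw [fCoeff, he]
  ring

lemma two_pi_pos : (0:ℝ) < 2 * Real.pi := by positivity

lemma fCoeff_one (m : ℤ) : fCoeff (fun _ => (1:ℂ)) m = if m = 0 then 1 else 0 := by
  rw [fCoeff]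
  rcases eq_or_ne m 0 with hm | hm
  · subst hm
    have h0 : ∀ θ : ℝ, (1:ℂ) * Complex.exp (-Complex.I * ((0:ℤ):ℂ) * θ) = 1 := by
      intro θ; norm_num
    rw [if_pos rfl, intervalIntegral.integral_congr (g := fun _ => (1:ℂ)) (fun θ _ => h0 θ),
      intervalIntegral.integral_const, sub_neg_eq_add, Complex.real_smul, mul_one]
    have hne : (2 * (Real.pi:ℂ)) ≠ 0 := by exact_mod_cast (ne_of_gt two_pi_pos)
    rw [show ((Real.pi + Real.pi : ℝ) : ℂ) = 2 * (Real.pi:ℂ) by push_cast; ring,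
      one_div_mul_cancel hne]
  · rw [if_neg hm]
    have hc : (-Complex.I * (m:ℂ)) ≠ 0 := by
      simp [Complex.I_ne_zero, Complex.ext_iff, hm]
    have : ∀ θ : ℝ, (1:ℂ) * Complex.exp (-Complex.I * (m:ℂ) * θ) =
        Complex.exp ((-Complex.I * (m:ℂ)) * θ) := fun θ => by rw [one_mul]
    rw [intervalIntegral.integral_congr (g := fun θ : ℝ =>
      Complex.exp ((-Complex.I * (m:ℂ)) * θ)) (fun θ _ => this θ)]
    rw [integral_exp_mul_complex hc]
    have hexp : Complex.exp (-Complex.I * (m:ℂ) * (Real.pi:ℂ)) =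
        Complex.exp (-Complex.I * (m:ℂ) * ((-Real.pi : ℝ):ℂ)) := by
      rw [Complex.exp_eq_exp_iff_exists_int]
      refine ⟨-m, ?_⟩
      push_cast
      ring
    rw [hexp]
    simp

lemma toeplitz_one (n : ℕ) : toeplitzC n (fun _ => (1:ℂ)) = 1 := by
  ext j k
  rw [toeplitzC, Matrix.of_apply, fCoeff_one, Matrix.one_apply]
  have : (j:ℤ) - (k:ℤ) = 0 ↔ j = k := by
    constructor
    · intro h; exact Fin.ext (by omega)
    · intro h; subst h; ring
  simp only [this]

lemma integrable_tp_sq (n : ℕ) (x : Fin n → ℂ) :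
    IntervalIntegrable (fun θ => ‖tp n x θ‖^2) MeasureTheory.volume (-Real.pi) Real.pi := by
  apply Continuous.intervalIntegrable
  have : Continuous (tp n x) := by
    apply continuous_finset_sum
    intro j _
    exact continuous_const.mul (cont_exp _)
  fun_prop

lemma integral_tp_sq (n : ℕ) (x : Fin n → ℂ) :
    (∫ θ in (-Real.pi)..Real.pi, ‖tp n x θ‖^2) = 2 * Real.pi * S x := by
  have h1 := dot_toeplitz (g := fun _ => (1:ℂ))
    (intervalIntegrable_const) x x
  rw [toeplitz_one n, Matrix.one_mulVec, star_dot_self] at h1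
  have h2 : ∀ θ : ℝ, (1:ℂ) * ((starRingEnd ℂ) (tp n x θ) * tp n x θ) =
      ((‖tp n x θ‖^2 : ℝ) : ℂ) := by
    intro θ
    rw [one_mul, Complex.conj_mul']
    norm_cast
  rw [intervalIntegral.integral_congr (g := fun θ => ((‖tp n x θ‖^2 : ℝ) : ℂ))
    (fun θ _ => h2 θ)] at h1
  rw [intervalIntegral.integral_ofReal] at h1
  have h4 : S x = 1 / (2 * Real.pi) * ∫ θ in (-Real.pi)..Real.pi, ‖tp n x θ‖^2 := by
    exact_mod_cast h1
  have hpi := Real.pi_ne_zero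
  field_simp at h4
  linarith

/-- finite Cauchy-Schwarz on dot products -/
lemma dot_cs {n : ℕ} (x w : Fin n → ℂ) :
    ‖star x ⬝ᵥ w‖ ≤ Real.sqrt (S x) * Real.sqrt (S w) := by
  have h := norm_inner_le_norm (𝕜 := ℂ)
    ((WithLp.equiv 2 (Fin n → ℂ)).symm x) ((WithLp.equiv 2 (Fin n → ℂ)).symm w)
  rw [EuclideanSpace.inner_eq_star_dotProduct] at h
  simp only [WithLp.equiv_symm_apply, WithLp.ofLp_toLp] at h
  rw [dotProduct_comm] at h
  rw [EuclideanSpace.norm_eq, EuclideanSpace.norm_eq] at h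
  have hx : ∀ i, ‖(WithLp.equiv 2 (Fin n → ℂ)).symm x i‖ = ‖x i‖ := fun i => rfl
  have hw : ∀ i, ‖(WithLp.equiv 2 (Fin n → ℂ)).symm w i‖ = ‖w i‖ := fun i => rfl
  simp only [hx, hw] at h
  exact h

lemma norm_one_div_two_pi : ‖(1 / (2 * Real.pi) : ℂ)‖ = 1 / (2 * Real.pi) := by
  rw [show (1 / (2 * Real.pi) : ℂ) = (((1 / (2 * Real.pi) : ℝ)) : ℂ) by push_cast; ring]
  rw [Complex.norm_real]
  rw [Real.norm_eq_abs, abs_of_pos (by positivity)]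

/-- bilinear bound -/
lemma dot_bound {n : ℕ} {g : ℝ → ℂ} (hgm : Measurable g) {C : ℝ} (hC : 0 ≤ C)
    (hgC : ∀ θ ∈ Set.Icc (-Real.pi) Real.pi, ‖g θ‖ ≤ C) (x y : Fin n → ℂ) :
    ‖star x ⬝ᵥ (toeplitzC n g) *ᵥ y‖ ≤ C * Real.sqrt (S x) * Real.sqrt (S y) := by
  have hg := intervalIntegrable_of_bounded hgm hgC
  by_cases hx : x = 0
  · subst hx
    simp only [star_zero, zero_dotProduct, norm_zero]
    positivity
  by_cases hy : y = 0
  · subst hy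
    simp only [Matrix.mulVec_zero, dotProduct_zero, norm_zero]
    positivity
  have hSx : 0 < S x := lt_of_le_of_ne (S_nonneg x) (fun h => hx (S_eq_zero h.symm))
  have hSy : 0 < S y := lt_of_le_of_ne (S_nonneg y) (fun h => hy (S_eq_zero h.symm))
  set t : ℝ := Real.sqrt (S y) / Real.sqrt (S x) with ht
  have hsx : 0 < Real.sqrt (S x) := Real.sqrt_pos.mpr hSx
  have hsy : 0 < Real.sqrt (S y) := Real.sqrt_pos.mpr hSy
  have htpos : 0 < t := div_pos hsy hsx
  rw [dot_toeplitz hg x y, norm_mul, norm_one_div_two_pi]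
  -- bound the integral
  have hbd : ∀ᵐ θ ∂(MeasureTheory.volume.restrict (Set.uIoc (-Real.pi) Real.pi)),
      ‖g θ * ((starRingEnd ℂ) (tp n x θ) * tp n y θ)‖ ≤
        C * ((t * ‖tp n x θ‖^2 + t⁻¹ * ‖tp n y θ‖^2) / 2) := by
    rw [MeasureTheory.ae_restrict_iff' measurableSet_uIoc]
    refine Filter.Eventually.of_forall fun θ hθ => ?_
    have hθ' : θ ∈ Set.Icc (-Real.pi) Real.pi := by
      rw [Set.uIoc_of_le (by linarith [Real.pi_pos])] at hθ
      exact ⟨le_of_lt hθ.1, hθ.2⟩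
    have h1 : ‖g θ * ((starRingEnd ℂ) (tp n x θ) * tp n y θ)‖ ≤
        C * (‖tp n x θ‖ * ‖tp n y θ‖) := by
      rw [norm_mul, norm_mul, RCLike.norm_conj]
      have := hgC θ hθ'
      have h2 : (0:ℝ) ≤ ‖tp n x θ‖ * ‖tp n y θ‖ := by positivity
      exact mul_le_mul_of_nonneg_right this h2
    refine le_trans h1 ?_
    have hamgm : ‖tp n x θ‖ * ‖tp n y θ‖ ≤
        (t * ‖tp n x θ‖^2 + t⁻¹ * ‖tp n y θ‖^2) / 2 := by
      have h3 : 0 ≤ (Real.sqrt t * ‖tp n x θ‖ - Real.sqrt t⁻¹ * ‖tp n y θ‖)^2 := sq_nonneg _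
      have h4 : Real.sqrt t ^ 2 = t := Real.sq_sqrt (le_of_lt htpos)
      have h5 : Real.sqrt t⁻¹ ^ 2 = t⁻¹ := Real.sq_sqrt (by positivity)
      have h6 : Real.sqrt t * Real.sqrt t⁻¹ = 1 := by
        rw [← Real.sqrt_mul (le_of_lt htpos), mul_inv_cancel₀ (ne_of_gt htpos), Real.sqrt_one]
      have hexp : (Real.sqrt t * ‖tp n x θ‖ - Real.sqrt t⁻¹ * ‖tp n y θ‖)^2 =
          t * ‖tp n x θ‖^2 + t⁻¹ * ‖tp n y θ‖^2
            - 2 * (‖tp n x θ‖ * ‖tp n y θ‖) := by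
        have hring : (Real.sqrt t * ‖tp n x θ‖ - Real.sqrt t⁻¹ * ‖tp n y θ‖)^2 =
            (Real.sqrt t ^ 2) * ‖tp n x θ‖^2 + (Real.sqrt t⁻¹ ^ 2) * ‖tp n y θ‖^2
              - 2 * (Real.sqrt t * Real.sqrt t⁻¹) * (‖tp n x θ‖ * ‖tp n y θ‖) := by ring
        rw [hring, h4, h5, h6]; ring
      rw [hexp] at h3
      linarith
    exact mul_le_mul_of_nonneg_left hamgm hC
  have hintbd : IntervalIntegrable
      (fun θ => C * ((t * ‖tp n x θ‖^2 + t⁻¹ * ‖tp n y θ‖^2) / 2))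
      MeasureTheory.volume (-Real.pi) Real.pi := by
    apply IntervalIntegrable.const_mul
    apply IntervalIntegrable.div_const
    exact ((integrable_tp_sq n x).const_mul t).add ((integrable_tp_sq n y).const_mul t⁻¹)
  have hnormint := intervalIntegral.norm_integral_le_abs_of_norm_le hbd hintbd
  have hval : (∫ θ in (-Real.pi)..Real.pi,
      C * ((t * ‖tp n x θ‖^2 + t⁻¹ * ‖tp n y θ‖^2) / 2)) =
      C * (2 * Real.pi) * (Real.sqrt (S x) * Real.sqrt (S y)) := by
    rw [intervalIntegral.integral_const_mul]
    rw [show (fun θ => (t * ‖tp n x θ‖^2 + t⁻¹ * ‖tp n y θ‖^2) / 2) =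
      (fun θ => (t / 2) * ‖tp n x θ‖^2 + (t⁻¹ / 2) * ‖tp n y θ‖^2) from funext fun θ => by ring]
    rw [intervalIntegral.integral_add ((integrable_tp_sq n x).const_mul _)
      ((integrable_tp_sq n y).const_mul _)]
    rw [intervalIntegral.integral_const_mul, intervalIntegral.integral_const_mul]
    rw [integral_tp_sq, integral_tp_sq]
    have hSx' : Real.sqrt (S x) ^ 2 = S x := Real.sq_sqrt (le_of_lt hSx)
    have hSy' : Real.sqrt (S y) ^ 2 = S y := Real.sq_sqrt (le_of_lt hSy)
    have h7 : t * S x = Real.sqrt (S y) * Real.sqrt (S x) := by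
      rw [ht]
      field_simp
      linear_combination (-1) * hSx'
    have h8 : t⁻¹ * S y = Real.sqrt (S x) * Real.sqrt (S y) := by
      rw [ht, inv_div]
      field_simp
      linear_combination (-1) * hSy'
    have h9 : t / 2 * (2 * Real.pi * S x) + t⁻¹ / 2 * (2 * Real.pi * S y) =
        Real.pi * (t * S x) + Real.pi * (t⁻¹ * S y) := by ring
    rw [h9, h7, h8]
    ring
  rw [hval] at hnormint
  have habs : |C * (2 * Real.pi) * (Real.sqrt (S x) * Real.sqrt (S y))| =
      C * (2 * Real.pi) * (Real.sqrt (S x) * Real.sqrt (S y)) := by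
    apply _root_.abs_of_nonneg
    have := Real.pi_pos
    positivity
  rw [habs] at hnormint
  calc (1 / (2 * Real.pi)) * ‖∫ θ in (-Real.pi)..Real.pi,
        g θ * ((starRingEnd ℂ) (tp n x θ) * tp n y θ)‖
      ≤ (1 / (2 * Real.pi)) * (C * (2 * Real.pi) * (Real.sqrt (S x) * Real.sqrt (S y))) := by
        apply mul_le_mul_of_nonneg_left hnormint
        positivity
    _ = C * Real.sqrt (S x) * Real.sqrt (S y) := by
        have := Real.pi_ne_zero
        field_simp

/-- coercivity of the Toeplitz matrix of `|f|` -/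
lemma dot_lower {n : ℕ} {f : ℝ → ℂ} (hm : Measurable f) {C δ : ℝ} (hδ : 0 < δ)
    (hfC : ∀ θ ∈ Set.Icc (-Real.pi) Real.pi, ‖f θ‖ ≤ C)
    (hfδ : ∀ θ ∈ Set.Icc (-Real.pi) Real.pi, δ ≤ ‖f θ‖) (x : Fin n → ℂ) :
    δ * S x ≤ (star x ⬝ᵥ (toeplitzC n (fun θ => ((‖f θ‖ : ℝ) : ℂ))) *ᵥ x).re := by
  have hgm : Measurable (fun θ => ((‖f θ‖ : ℝ) : ℂ)) :=
    Complex.measurable_ofReal.comp hm.norm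
  have hgC : ∀ θ ∈ Set.Icc (-Real.pi) Real.pi, ‖((‖f θ‖ : ℝ) : ℂ)‖ ≤ C := by
    intro θ hθ
    rw [Complex.norm_real, Real.norm_eq_abs, _root_.abs_of_nonneg (norm_nonneg _)]
    exact hfC θ hθ
  have hg := intervalIntegrable_of_bounded hgm hgC
  rw [dot_toeplitz hg x x]
  have h2 : ∀ θ : ℝ, ((‖f θ‖ : ℝ) : ℂ) * ((starRingEnd ℂ) (tp n x θ) * tp n x θ) =
      (((‖f θ‖ * ‖tp n x θ‖^2 : ℝ)) : ℂ) := by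
    intro θ
    rw [Complex.conj_mul']
    push_cast
    ring
  rw [intervalIntegral.integral_congr (g := fun θ => (((‖f θ‖ * ‖tp n x θ‖^2 : ℝ)) : ℂ))
    (fun θ _ => h2 θ)]
  rw [intervalIntegral.integral_ofReal]
  rw [show (1 / (2 * Real.pi) : ℂ) = (((1 / (2 * Real.pi) : ℝ)) : ℂ) by push_cast; ring]
  rw [← Complex.ofReal_mul, Complex.ofReal_re]
  -- now a real inequality
  have hmono : (∫ θ in (-Real.pi)..Real.pi, δ * ‖tp n x θ‖^2) ≤
      ∫ θ in (-Real.pi)..Real.pi, ‖f θ‖ * ‖tp n x θ‖^2 := by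
    apply intervalIntegral.integral_mono_on (by linarith [Real.pi_pos])
    · exact (integrable_tp_sq n x).const_mul δ
    · have : IntervalIntegrable (fun θ => ‖f θ‖) MeasureTheory.volume (-Real.pi) Real.pi := by
        have := intervalIntegrable_of_bounded hm hfC
        exact this.norm
      exact this.mul_continuousOn (by
        have : Continuous (tp n x) := by
          apply continuous_finset_sum
          intro j _
          exact continuous_const.mul (cont_exp _)
        fun_prop)
    · intro θ hθ
      have h1 := hfδ θ hθ
      have h2 : (0:ℝ) ≤ ‖tp n x θ‖^2 := by positivity
      exact mul_le_mul_of_nonneg_right h1 h2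
  rw [intervalIntegral.integral_const_mul, integral_tp_sq] at hmono
  have hpi := Real.pi_pos
  have : (1 / (2 * Real.pi)) * (δ * (2 * Real.pi * S x)) = δ * S x := by
    field_simp
  calc δ * S x = (1 / (2 * Real.pi)) * (δ * (2 * Real.pi * S x)) := this.symm
    _ ≤ (1 / (2 * Real.pi)) * ∫ θ in (-Real.pi)..Real.pi, ‖f θ‖ * ‖tp n x θ‖^2 := by
        apply mul_le_mul_of_nonneg_left hmono
        positivity

/-! ### CLM lemmas -/

lemma clm_apply {n : ℕ} (M : Matrix (Fin n) (Fin n) ℂ) (v : EuclideanSpace ℂ (Fin n)) :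
    (Matrix.toEuclideanCLM (𝕜 := ℂ) M) v = (WithLp.equiv 2 (Fin n → ℂ)).symm
      (M *ᵥ (WithLp.equiv 2 (Fin n → ℂ) v)) := rfl

lemma euclid_norm {n : ℕ} (v : EuclideanSpace ℂ (Fin n)) :
    ‖v‖ = Real.sqrt (S (fun i => v i)) := by
  rw [EuclideanSpace.norm_eq]
  rfl

lemma opnorm_le_of_dot {n : ℕ} (M : Matrix (Fin n) (Fin n) ℂ) {C : ℝ} (hC : 0 ≤ C)
    (h : ∀ x y : Fin n → ℂ, ‖star x ⬝ᵥ M *ᵥ y‖ ≤ C * Real.sqrt (S x) * Real.sqrt (S y)) :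
    ‖Matrix.toEuclideanCLM (𝕜 := ℂ) M‖ ≤ C := by
  apply ContinuousLinearMap.opNorm_le_bound _ hC
  intro v
  set v' : Fin n → ℂ := WithLp.equiv 2 (Fin n → ℂ) v with hv'
  set u : Fin n → ℂ := M *ᵥ v' with hu
  have happ : (Matrix.toEuclideanCLM (𝕜 := ℂ) M) v = (WithLp.equiv 2 (Fin n → ℂ)).symm u :=
    clm_apply M v
  have hnorm : ‖(Matrix.toEuclideanCLM (𝕜 := ℂ) M) v‖ = Real.sqrt (S u) := by
    rw [happ, euclid_norm]
    rfl
  have hnv : ‖v‖ = Real.sqrt (S v') := by rw [euclid_norm]; rfl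
  have hkey : S u ≤ C * Real.sqrt (S u) * Real.sqrt (S v') := by
    have h1 : star u ⬝ᵥ M *ᵥ v' = (S u : ℂ) := by rw [← hu, star_dot_self]
    have := h u v'
    rw [h1, Complex.norm_real, Real.norm_eq_abs, _root_.abs_of_nonneg (S_nonneg u)] at this
    exact this
  rw [hnorm, hnv]
  by_cases hz : S u = 0
  · rw [hz, Real.sqrt_zero]
    positivity
  · have hupos : 0 < S u := lt_of_le_of_ne (S_nonneg u) (Ne.symm hz)
    have hsu : 0 < Real.sqrt (S u) := Real.sqrt_pos.mpr hupos
    have h2 : Real.sqrt (S u) ^ 2 = S u := Real.sq_sqrt (le_of_lt hupos)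
    nlinarith [Real.sqrt_nonneg (S v')]

/-! ### exchange matrix -/

lemma exchange_apply {n : ℕ} (j k : Fin n) :
    exchangeC n j k = if k = j.rev then 1 else 0 := by
  rw [exchangeC, Matrix.of_apply]
  congr 1
  simp only [eq_iff_iff]
  constructor
  · intro h
    apply Fin.ext
    rw [Fin.val_rev]
    omega
  · intro h
    subst h
    rw [Fin.val_rev]
    omega

lemma exchange_mulVec {n : ℕ} (v : Fin n → ℂ) :
    (exchangeC n) *ᵥ v = fun j => v j.rev := by
  funext j
  rw [mulVec]
  simp only [dotProduct, exchange_apply]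
  rw [Finset.sum_eq_single j.rev]
  · simp
  · intro k _ hk
    rw [if_neg hk, zero_mul]
  · intro h
    exact absurd (Finset.mem_univ _) h

lemma S_rev {n : ℕ} (v : Fin n → ℂ) : S (fun j : Fin n => v j.rev) = S v := by
  rw [S, S]
  exact Fintype.sum_equiv (Fin.revPerm) _ _ (fun j => rfl)

lemma exchange_opnorm {n : ℕ} : ‖Matrix.toEuclideanCLM (𝕜 := ℂ) (exchangeC n)‖ ≤ 1 := by
  apply ContinuousLinearMap.opNorm_le_bound _ zero_le_one
  intro v
  rw [one_mul]
  have happ := clm_apply (exchangeC n) v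
  rw [happ, euclid_norm, euclid_norm]
  have : S (fun i => (WithLp.equiv 2 (Fin n → ℂ)).symm
      ((exchangeC n) *ᵥ (WithLp.equiv 2 (Fin n → ℂ) v)) i) = S (fun i => v i) := by
    have h1 : (fun i => (WithLp.equiv 2 (Fin n → ℂ)).symm
        ((exchangeC n) *ᵥ (WithLp.equiv 2 (Fin n → ℂ) v)) i) =
        (fun i : Fin n => v i.rev) := by
      funext i
      rw [show ((WithLp.equiv 2 (Fin n → ℂ)).symm
        ((exchangeC n) *ᵥ (WithLp.equiv 2 (Fin n → ℂ) v)) i) =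
        ((exchangeC n) *ᵥ (fun j => v j)) i from rfl]
      rw [exchange_mulVec]
    rw [h1, S_rev]
  rw [this]

/-- operator norm of a Toeplitz matrix is bounded by the sup of symbol -/
lemma toeplitz_opnorm {n : ℕ} {g : ℝ → ℂ} (hgm : Measurable g) {C : ℝ} (hC : 0 ≤ C)
    (hgC : ∀ θ ∈ Set.Icc (-Real.pi) Real.pi, ‖g θ‖ ≤ C) :
    ‖Matrix.toEuclideanCLM (𝕜 := ℂ) (toeplitzC n g)‖ ≤ C :=
  opnorm_le_of_dot _ hC (dot_bound hgm hC hgC)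

/-! ### invertibility and inverse norm bound for the Toeplitz matrix of `|f|` -/

section inverse

variable {n : ℕ} {f : ℝ → ℂ} {C δ : ℝ}

lemma absToeplitz_det_ne_zero (hm : Measurable f) (hδ : 0 < δ)
    (hfC : ∀ θ ∈ Set.Icc (-Real.pi) Real.pi, ‖f θ‖ ≤ C)
    (hfδ : ∀ θ ∈ Set.Icc (-Real.pi) Real.pi, δ ≤ ‖f θ‖) :
    (toeplitzC n (fun θ => ((‖f θ‖ : ℝ) : ℂ))).det ≠ 0 := by
  intro hdet
  obtain ⟨v, hv0, hv⟩ := (Matrix.exists_mulVec_eq_zero_iff).mpr hdet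
  have hlow := dot_lower hm hδ hfC hfδ v
  rw [hv] at hlow
  simp only [dotProduct_zero, Complex.zero_re] at hlow
  have hSv : 0 < S v := by
    rcases lt_or_eq_of_le (S_nonneg v) with h | h
    · exact h
    · exact absurd (S_eq_zero h.symm) hv0
  nlinarith

lemma absToeplitz_inv_opnorm (hm : Measurable f) (hδ : 0 < δ)
    (hfC : ∀ θ ∈ Set.Icc (-Real.pi) Real.pi, ‖f θ‖ ≤ C)
    (hfδ : ∀ θ ∈ Set.Icc (-Real.pi) Real.pi, δ ≤ ‖f θ‖) :
    ‖Matrix.toEuclideanCLM (𝕜 := ℂ) (toeplitzC n (fun θ => ((‖f θ‖ : ℝ) : ℂ)))⁻¹‖ ≤ δ⁻¹ := by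
  set B := toeplitzC n (fun θ => ((‖f θ‖ : ℝ) : ℂ)) with hB
  have hdet := absToeplitz_det_ne_zero (n := n) hm hδ hfC hfδ
  apply ContinuousLinearMap.opNorm_le_bound _ (by positivity)
  intro w
  set v : EuclideanSpace ℂ (Fin n) := (Matrix.toEuclideanCLM (𝕜 := ℂ) B⁻¹) w with hv
  have hBv : (Matrix.toEuclideanCLM (𝕜 := ℂ) B) v = w := by
    rw [hv, ← ContinuousLinearMap.comp_apply, ← ContinuousLinearMap.mul_def,
      ← _root_.map_mul]
    rw [Matrix.mul_nonsing_inv B (isUnit_iff_ne_zero.mpr hdet)]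
    rw [_root_.map_one]
    rfl
  -- lower bound : δ ‖v‖ ≤ ‖B v‖
  set v' : Fin n → ℂ := WithLp.equiv 2 (Fin n → ℂ) v with hv'
  have hlow := dot_lower (n := n) hm hδ hfC hfδ v'
  have hcs : ‖star v' ⬝ᵥ B *ᵥ v'‖ ≤ Real.sqrt (S v') * Real.sqrt (S (B *ᵥ v')) :=
    dot_cs v' (B *ᵥ v')
  have hre : (star v' ⬝ᵥ B *ᵥ v').re ≤ ‖star v' ⬝ᵥ B *ᵥ v'‖ :=
    le_trans (le_abs_self _) (Complex.abs_re_le_norm _)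
  have hnv : ‖v‖ = Real.sqrt (S v') := by rw [euclid_norm]; rfl
  have hnw : ‖w‖ = Real.sqrt (S (B *ᵥ v')) := by
    rw [← hBv, euclid_norm]
    congr 1
  have hkey : δ * S v' ≤ Real.sqrt (S v') * Real.sqrt (S (B *ᵥ v')) :=
    le_trans hlow (le_trans hre hcs)
  -- conclude ‖v‖ ≤ δ⁻¹ ‖w‖
  have hgoal : ‖v‖ ≤ δ⁻¹ * ‖w‖ := by
    rw [hnv, hnw]
    by_cases hz : S v' = 0
    · rw [hz, Real.sqrt_zero]
      positivity
    · have hpos : 0 < S v' := lt_of_le_of_ne (S_nonneg v') (Ne.symm hz)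
      have hs : 0 < Real.sqrt (S v') := Real.sqrt_pos.mpr hpos
      have hsq : Real.sqrt (S v') ^ 2 = S v' := Real.sq_sqrt (le_of_lt hpos)
      rw [show δ⁻¹ * Real.sqrt (S (B *ᵥ v')) = Real.sqrt (S (B *ᵥ v')) / δ from by ring,
        le_div_iff₀ hδ]
      nlinarith [hkey, hsq, hs, Real.sqrt_nonneg (S (B *ᵥ v'))]
  exact hgoal

end inverse

/-! ### conjugation symmetry of Fourier coefficients -/

lemma intervalIntegral_conj {a b : ℝ} (f : ℝ → ℂ) :
    (∫ x in a..b, (starRingEnd ℂ) (f x)) = (starRingEnd ℂ) (∫ x in a..b, f x) := by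
  rw [intervalIntegral, intervalIntegral, map_sub, ← _root_.integral_conj,
    ← _root_.integral_conj]

lemma fCoeff_conj_neg (g : ℝ → ℂ) (k : ℤ) :
    fCoeff (fun θ => (starRingEnd ℂ) (g (-θ))) k = (starRingEnd ℂ) (fCoeff g k) := by
  rw [fCoeff, fCoeff, _root_.map_mul]
  congr 1
  · rw [show ((1 / (2 * Real.pi) : ℂ)) = (((1 / (2 * Real.pi) : ℝ)) : ℂ) by push_cast; ring,
      Complex.conj_ofReal]
  · rw [← intervalIntegral_conj]
    have h1 : ∀ θ : ℝ, (starRingEnd ℂ) (g (-θ)) * Complex.exp (-Complex.I * (k : ℂ) * θ) =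
        (fun u : ℝ => (starRingEnd ℂ) (g u) * Complex.exp (Complex.I * (k : ℂ) * u)) (-θ) := by
      intro θ
      simp only
      congr 2
      push_cast
      ring
    rw [intervalIntegral.integral_congr (fun θ _ => h1 θ),
      intervalIntegral.integral_comp_neg
        (fun u : ℝ => (starRingEnd ℂ) (g u) * Complex.exp (Complex.I * (k : ℂ) * u))]
    simp only [neg_neg]
    apply intervalIntegral.integral_congr
    intro θ _
    show (starRingEnd ℂ) (g θ) * Complex.exp (Complex.I * (k:ℂ) * θ) =
      (starRingEnd ℂ) (g θ * Complex.exp (-Complex.I * (k:ℂ) * θ))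
    rw [_root_.map_mul, ← Complex.exp_conj]
    congr 2
    simp only [_root_.map_mul, map_neg, Complex.conj_I, map_intCast, Complex.conj_ofReal]
    ring

/-- all Fourier coefficients of `f` are real -/
lemma fCoeff_real {f : ℝ → ℂ}
    (hreal : ∀ n : ℕ, ∀ j k : Fin n, (toeplitzC n f j k).im = 0) (k : ℤ) :
    (fCoeff f k).im = 0 := by
  rcases le_or_gt 0 k with hk | hk
  · have h := hreal (k.natAbs + 1) ⟨k.natAbs, Nat.lt_succ_self _⟩ ⟨0, Nat.succ_pos _⟩
    have he : fCoeff f k = toeplitzC (k.natAbs + 1) f ⟨k.natAbs, Nat.lt_succ_self _⟩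
        ⟨0, Nat.succ_pos _⟩ := by
      rw [toeplitzC, Matrix.of_apply]
      congr 1
      simp only [Fin.val_mk, Nat.cast_zero, sub_zero]
      omega
    rw [he]
    exact h
  · have h := hreal (k.natAbs + 1) ⟨0, Nat.succ_pos _⟩ ⟨k.natAbs, Nat.lt_succ_self _⟩
    have he : fCoeff f k = toeplitzC (k.natAbs + 1) f ⟨0, Nat.succ_pos _⟩
        ⟨k.natAbs, Nat.lt_succ_self _⟩ := by
      rw [toeplitzC, Matrix.of_apply]
      congr 1
      simp only [Fin.val_mk, Nat.cast_zero, zero_sub]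
      omega
    rw [he]
    exact h

section aesymm

variable {f : ℝ → ℂ} {C : ℝ}

/-- the almost-everywhere conjugate symmetry of `f` -/
lemma ae_symm (hmeas : Measurable f)
    (hC : ∀ θ ∈ Set.Icc (-Real.pi) Real.pi, ‖f θ‖ ≤ C)
    (hreal : ∀ k : ℤ, (fCoeff f k).im = 0) :
    ∀ᵐ x ∂(MeasureTheory.volume.restrict (Set.Ioc (-Real.pi) Real.pi)),
      f x = (starRingEnd ℂ) (f (-x)) := by
  haveI : Fact ((0:ℝ) < 2 * Real.pi) := ⟨two_pi_pos⟩
  set h : ℝ → ℂ := fun θ => f θ - (starRingEnd ℂ) (f (-θ)) with hh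
  have hmeas_h : Measurable h :=
    hmeas.sub (continuous_star.measurable.comp (hmeas.comp measurable_neg))
  set H : AddCircle (2 * Real.pi) → ℂ := AddCircle.liftIoc (2 * Real.pi) (-Real.pi) h with hH
  have hmeasH : Measurable H := by
    have : Measurable fun y : AddCircle (2 * Real.pi) =>
        h ((AddCircle.equivIoc (2 * Real.pi) (-Real.pi) y : Set.Ioc (-Real.pi)
            (-Real.pi + 2 * Real.pi)) : ℝ) :=
      hmeas_h.comp (measurable_subtype_coe.comp
        (AddCircle.measurableEquivIoc (2 * Real.pi) (-Real.pi)).measurable)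
    exact this
  have hbound : ∀ y, ‖H y‖ ≤ C + C := by
    intro y
    have hmem := (AddCircle.equivIoc (2 * Real.pi) (-Real.pi) y).2
    set x : ℝ := ((AddCircle.equivIoc (2 * Real.pi) (-Real.pi) y : Set.Ioc (-Real.pi)
      (-Real.pi + 2 * Real.pi)) : ℝ) with hx
    have hx1 : x ∈ Set.Icc (-Real.pi) Real.pi := ⟨le_of_lt hmem.1, by
      have := hmem.2
      linarith⟩
    have hx2 : -x ∈ Set.Icc (-Real.pi) Real.pi := ⟨by linarith [hx1.2], by linarith [hx1.1]⟩
    have happ : H y = h x := rfl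
    rw [happ, hh]
    refine le_trans (norm_sub_le _ _) ?_
    rw [RCLike.norm_conj]
    exact add_le_add (hC x hx1) (hC (-x) hx2)
  have hL2 : MeasureTheory.MemLp H 2 AddCircle.haarAddCircle :=
    MeasureTheory.MemLp.of_bound hmeasH.aestronglyMeasurable (C + C)
      (Filter.Eventually.of_forall hbound)
  -- integrability of the pieces of h over [-π,π]
  have hf_int : IntervalIntegrable f MeasureTheory.volume (-Real.pi) Real.pi :=
    intervalIntegrable_of_bounded hmeas hC
  have hconj_meas : Measurable fun θ : ℝ => (starRingEnd ℂ) (f (-θ)) :=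
    continuous_star.measurable.comp (hmeas.comp measurable_neg)
  have hconj_bdd : ∀ θ ∈ Set.Icc (-Real.pi) Real.pi, ‖(starRingEnd ℂ) (f (-θ))‖ ≤ C := by
    intro θ hθ
    rw [RCLike.norm_conj]
    exact hC (-θ) ⟨by linarith [hθ.2], by linarith [hθ.1]⟩
  have hconj_int : IntervalIntegrable (fun θ => (starRingEnd ℂ) (f (-θ)))
      MeasureTheory.volume (-Real.pi) Real.pi :=
    intervalIntegrable_of_bounded hconj_meas hconj_bdd
  -- all Fourier coefficients of h vanish
  have hfc : ∀ k : ℤ, fCoeff h k = 0 := by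
    intro k
    have hsplit : fCoeff h k = fCoeff f k - fCoeff (fun θ => (starRingEnd ℂ) (f (-θ))) k := by
      rw [fCoeff, fCoeff, fCoeff]
      have : ∀ θ : ℝ, h θ * Complex.exp (-Complex.I * (k:ℂ) * θ) =
          f θ * Complex.exp (-Complex.I * (k:ℂ) * θ) -
            (starRingEnd ℂ) (f (-θ)) * Complex.exp (-Complex.I * (k:ℂ) * θ) := by
        intro θ; rw [hh]; ring
      rw [intervalIntegral.integral_congr (fun θ _ => this θ),
        intervalIntegral.integral_sub (integrable_mul_exp hf_int _)
          (integrable_mul_exp hconj_int _)]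
      ring
    rw [hsplit, fCoeff_conj_neg]
    rw [Complex.conj_eq_iff_im.mpr (hreal k)]
    ring
  -- all AddCircle Fourier coefficients of H vanish
  have hcoeff : ∀ k : ℤ, fourierCoeff H k = 0 := by
    intro k
    have e2 : -Real.pi + 2 * Real.pi = Real.pi := by ring
    rw [fourierCoeff_eq_intervalIntegral H k (-Real.pi), e2]
    have hae : ∀ᵐ x : ℝ, x ∈ Set.uIoc (-Real.pi) Real.pi →
        (fourier (-k) (x : AddCircle (2 * Real.pi)) : ℂ) • H ((x : ℝ) : AddCircle (2 * Real.pi)) =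
          h x * Complex.exp (-Complex.I * (k:ℂ) * x) := by
      refine Filter.Eventually.of_forall fun x hx => ?_
      rw [Set.uIoc_of_le (by linarith [Real.pi_pos])] at hx
      have hmem : x ∈ Set.Ioc (-Real.pi) (-Real.pi + 2 * Real.pi) := by
        rw [e2]; exact hx
      have hlift : H ((x : ℝ) : AddCircle (2 * Real.pi)) = h x :=
        AddCircle.liftIoc_coe_apply hmem
      rw [hlift, smul_eq_mul, mul_comm]
      congr 1
      rw [fourier_coe_apply]
      congr 1
      have h2pi : ((2 * Real.pi : ℝ) : ℂ) ≠ 0 := by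
        exact_mod_cast ne_of_gt two_pi_pos
      have hπc : ((Real.pi : ℝ) : ℂ) ≠ 0 := by exact_mod_cast Real.pi_ne_zero
      push_cast
      field_simp
    rw [intervalIntegral.integral_congr_ae hae]
    have : (1 / (2 * Real.pi) : ℝ) •
        (∫ x in (-Real.pi)..Real.pi, h x * Complex.exp (-Complex.I * (k:ℂ) * x)) =
        fCoeff h k := by
      rw [Complex.real_smul, fCoeff]
      push_cast
      ring
    rw [this, hfc k]
  -- conclude H = 0 a.e.
  have hFrepr : ∀ k : ℤ, fourierBasis.repr (hL2.toLp H) k = 0 := by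
    intro k
    rw [fourierBasis_repr]
    have hcongr : fourierCoeff (⇑(hL2.toLp H)) k = fourierCoeff H k := by
      unfold fourierCoeff
      apply MeasureTheory.integral_congr_ae
      filter_upwards [hL2.coeFn_toLp] with y hy
      rw [hy]
    rw [hcongr, hcoeff]
  have hF0 : hL2.toLp H = 0 := by
    have : fourierBasis.repr (hL2.toLp H) = 0 := by
      ext k
      simpa using hFrepr k
    exact (LinearIsometryEquiv.map_eq_zero_iff _).mp this
  have haeH : H =ᵐ[AddCircle.haarAddCircle] 0 := by
    have h1 : ⇑(hL2.toLp H) =ᵐ[AddCircle.haarAddCircle] H := hL2.coeFn_toLp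
    rw [hF0] at h1
    exact h1.symm.trans (MeasureTheory.Lp.coeFn_zero _ _ _)
  have hvolH : H =ᵐ[MeasureTheory.volume] 0 := by
    rw [AddCircle.volume_eq_smul_haarAddCircle]
    exact MeasureTheory.Measure.ae_smul_measure haeH _
  -- pull back along the quotient map
  have hS : MeasurableSet {y : AddCircle (2 * Real.pi) | H y ≠ 0} :=
    (hmeasH (measurableSet_singleton 0)).compl
  have hnull : MeasureTheory.volume {y : AddCircle (2 * Real.pi) | H y ≠ 0} = 0 := by
    have := hvolH
    rw [Filter.EventuallyEq, MeasureTheory.ae_iff] at this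
    simpa using this
  have hpre := (AddCircle.measurePreserving_mk (2 * Real.pi) (-Real.pi)).measure_preimage
      hS.nullMeasurableSet
  rw [hnull] at hpre
  have hpull : ∀ᵐ x ∂(MeasureTheory.volume.restrict
      (Set.Ioc (-Real.pi) (-Real.pi + 2 * Real.pi))),
      H ((x : ℝ) : AddCircle (2 * Real.pi)) = 0 := by
    rw [MeasureTheory.ae_iff]
    convert hpre using 2
    rfl
  have e2 : -Real.pi + 2 * Real.pi = Real.pi := by ring
  rw [e2] at hpull
  filter_upwards [hpull, MeasureTheory.ae_restrict_mem measurableSet_Ioc] with x hx hmem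
  have hmem' : x ∈ Set.Ioc (-Real.pi) (-Real.pi + 2 * Real.pi) := by rw [e2]; exact hmem
  have : H ↑x = h x := AddCircle.liftIoc_coe_apply hmem'
  rw [this] at hx
  have := sub_eq_zero.mp hx
  exact this

end aesymm

/-! ### realness of the Fourier coefficients of the normalized symbol -/

lemma fCoeff_ftilde_real {f : ℝ → ℂ} {δ : ℝ} (hδ : 0 < δ)
    (hlow : ∀ θ ∈ Set.Icc (-Real.pi) Real.pi, δ ≤ ‖f θ‖)
    (hsymm : ∀ᵐ x ∂(MeasureTheory.volume.restrict (Set.Ioc (-Real.pi) Real.pi)),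
      f x = (starRingEnd ℂ) (f (-x))) (k : ℤ) :
    (starRingEnd ℂ) (fCoeff (fun θ => f θ / (‖f θ‖ : ℂ)) k) =
      fCoeff (fun θ => f θ / (‖f θ‖ : ℂ)) k := by
  set ft : ℝ → ℂ := fun θ => f θ / ((‖f θ‖ : ℝ) : ℂ) with hft
  rw [← fCoeff_conj_neg ft k]
  rw [fCoeff, fCoeff]
  congr 1
  apply intervalIntegral.integral_congr_ae
  have huIoc : Set.uIoc (-Real.pi) Real.pi = Set.Ioc (-Real.pi) Real.pi :=
    Set.uIoc_of_le (by linarith [Real.pi_pos])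
  have hsymm' : ∀ᵐ x : ℝ, x ∈ Set.Ioc (-Real.pi) Real.pi → f x = (starRingEnd ℂ) (f (-x)) :=
    (MeasureTheory.ae_restrict_iff' measurableSet_Ioc).mp hsymm
  filter_upwards [hsymm'] with x hx hmem
  rw [huIoc] at hmem
  have hfx := hx hmem
  have hnorm : ‖f (-x)‖ = ‖f x‖ := by
    rw [hfx, RCLike.norm_conj]
  have hkey : (starRingEnd ℂ) (ft (-x)) = ft x := by
    rw [hft]
    simp only
    rw [map_div₀, Complex.conj_ofReal, hnorm, ← hfx]
  rw [hkey]

/-! ### hermitian structure -/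

lemma exchange_mul_apply {n : ℕ} (M : Matrix (Fin n) (Fin n) ℂ) (j k : Fin n) :
    (exchangeC n * M) j k = M j.rev k := by
  rw [Matrix.mul_apply]
  rw [Finset.sum_eq_single j.rev]
  · rw [exchange_apply, if_pos rfl, one_mul]
  · intro l _ hl
    rw [exchange_apply, if_neg hl, zero_mul]
  · intro hmem
    exact absurd (Finset.mem_univ _) hmem

lemma herm {n : ℕ} {g : ℝ → ℂ}
    (hconj : ∀ k : ℤ, (starRingEnd ℂ) (fCoeff g k) = fCoeff g k) :
    (exchangeC n * toeplitzC n g)ᴴ = exchangeC n * toeplitzC n g := by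
  ext j k
  rw [Matrix.conjTranspose_apply, exchange_mul_apply, exchange_mul_apply,
    toeplitzC, Matrix.of_apply, Matrix.of_apply]
  rw [RCLike.star_def, hconj]
  congr 1
  have hj := j.isLt
  have hk := k.isLt
  simp only [Fin.val_rev]
  omega

/-! ### spectrum of a hermitian matrix with numerical radius ≤ 1 -/

lemma spectrum_bound {n : ℕ} {M : Matrix (Fin n) (Fin n) ℂ} (hherm : Mᴴ = M)
    (hbd : ∀ v : Fin n → ℂ, ‖star v ⬝ᵥ M *ᵥ v‖ ≤ S v) {μ : ℂ} (hμ : μ ∈ spectrum ℂ M) :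
    μ.im = 0 ∧ -1 ≤ μ.re ∧ μ.re ≤ 1 := by
  rw [spectrum.mem_iff] at hμ
  have hdet : ((algebraMap ℂ (Matrix (Fin n) (Fin n) ℂ)) μ - M).det = 0 := by
    by_contra hne
    exact hμ ((Matrix.isUnit_iff_isUnit_det _).mpr (isUnit_iff_ne_zero.mpr hne))
  obtain ⟨v, hv0, hv⟩ := Matrix.exists_mulVec_eq_zero_iff.mpr hdet
  have hMv : M *ᵥ v = μ • v := by
    have h1 : ((algebraMap ℂ (Matrix (Fin n) (Fin n) ℂ)) μ - M) *ᵥ v =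
        ((algebraMap ℂ (Matrix (Fin n) (Fin n) ℂ)) μ) *ᵥ v - M *ᵥ v :=
      Matrix.sub_mulVec _ _ _
    rw [hv] at h1
    have h2 : ((algebraMap ℂ (Matrix (Fin n) (Fin n) ℂ)) μ) *ᵥ v = μ • v := by
      rw [Algebra.algebraMap_eq_smul_one, Matrix.smul_mulVec, Matrix.one_mulVec]
    rw [h2] at h1
    exact (sub_eq_zero.mp h1.symm).symm
  have hSpos : 0 < S v := by
    rcases lt_or_eq_of_le (S_nonneg v) with h | h
    · exact h
    · exact absurd (S_eq_zero h.symm) hv0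
  have hz : star v ⬝ᵥ M *ᵥ v = μ * (S v : ℂ) := by
    rw [hMv, dotProduct_smul, star_dot_self, smul_eq_mul]
  have hrealz : (starRingEnd ℂ) (star v ⬝ᵥ M *ᵥ v) = star v ⬝ᵥ M *ᵥ v := by
    have h1 : star v ⬝ᵥ (M *ᵥ v) = star (star (M *ᵥ v) ⬝ᵥ v) :=
      Matrix.star_dotProduct _ _
    have h2 : star (M *ᵥ v) ⬝ᵥ v = star v ⬝ᵥ M *ᵥ v := by
      rw [Matrix.star_mulVec, ← Matrix.dotProduct_mulVec, hherm]
    have h3 : star (star v ⬝ᵥ M *ᵥ v) = star v ⬝ᵥ M *ᵥ v := by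
      conv_lhs => rw [h1]
      rw [star_star, h2]
    rw [← RCLike.star_def]
    exact h3
  have hS0 : ((S v : ℝ) : ℂ) ≠ 0 := by
    exact_mod_cast ne_of_gt hSpos
  have hμreal : (starRingEnd ℂ) μ = μ := by
    have h2 : (starRingEnd ℂ) μ * ((S v : ℝ) : ℂ) = μ * ((S v : ℝ) : ℂ) := by
      have := hrealz
      rw [hz, _root_.map_mul, Complex.conj_ofReal] at this
      exact this
    exact mul_right_cancel₀ hS0 h2
  have him : μ.im = 0 := Complex.conj_eq_iff_im.mp hμreal
  have habs : ‖μ‖ * S v ≤ S v := by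
    have h3 := hbd v
    rw [hz, norm_mul, Complex.norm_real, Real.norm_eq_abs,
      _root_.abs_of_nonneg (le_of_lt hSpos)] at h3
    exact h3
  have hnorm : ‖μ‖ ≤ 1 := by
    by_contra hgt
    push_neg at hgt
    nlinarith
  have hre : |μ.re| ≤ 1 := by
    refine le_trans ?_ hnorm
    exact Complex.abs_re_le_norm μ
  exact ⟨him, (abs_le.mp hre).1, (abs_le.mp hre).2⟩

end Stmt5

open Stmt5 in
/-- Let `f ∈ L^∞([-π,π])` with `|f| ≥ δ > 0` on `[-π,π]` and `A_n(f)` real,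
let `A_M = A_n(|f|)`, `Y_n` the exchange matrix and `f̃ = f/|f|`. Then
`A_M⁻¹ Y_n A_n(f) = Y_n A_n(f̃) + E_n` with `‖E_n‖₂ = o(n)` as `n → ∞`, and every eigenvalue of
the symmetric matrix `Y_n A_n(f̃)` lies in `[-1, 1]`. -/
theorem stmt5 (f : ℝ → ℂ) (δ : ℝ) (hδ : 0 < δ)
    (hmeas : Measurable f)
    (hbdd : ∃ C : ℝ, ∀ θ ∈ Set.Icc (-Real.pi) Real.pi, ‖f θ‖ ≤ C)
    (hlow : ∀ θ ∈ Set.Icc (-Real.pi) Real.pi, δ ≤ ‖f θ‖)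
    (hreal : ∀ n : ℕ, ∀ j k : Fin n, (toeplitzC n f j k).im = 0) :
    Tendsto
      (fun n : ℕ =>
        ‖Matrix.toEuclideanCLM (𝕜 := ℂ)
            ((toeplitzC n fun θ => (‖f θ‖ : ℂ))⁻¹ * (exchangeC n * toeplitzC n f) -
              exchangeC n * toeplitzC n fun θ => f θ / (‖f θ‖ : ℂ))‖ / (n : ℝ))
      atTop (nhds 0) ∧
    ∀ n : ℕ, ∀ μ ∈ spectrum ℂ (exchangeC n * toeplitzC n fun θ => f θ / (‖f θ‖ : ℂ)),
      μ.im = 0 ∧ -1 ≤ μ.re ∧ μ.re ≤ 1 := by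

  obtain ⟨C, hC⟩ := hbdd
  have hπ := Real.pi_pos
  have h0mem : (0:ℝ) ∈ Set.Icc (-Real.pi) Real.pi := ⟨by linarith, by linarith⟩
  have hCpos : 0 < C := lt_of_lt_of_le hδ (le_trans (hlow 0 h0mem) (hC 0 h0mem))
  have hft_meas : Measurable (fun θ => f θ / ((‖f θ‖ : ℝ) : ℂ)) := by
    have heq : (fun θ => f θ / ((‖f θ‖ : ℝ) : ℂ)) =
        fun θ => f θ * ((((‖f θ‖)⁻¹ : ℝ)) : ℂ) := by
      funext θ
      rw [div_eq_mul_inv, ← Complex.ofReal_inv]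
    rw [heq]
    exact hmeas.mul (Complex.measurable_ofReal.comp hmeas.norm.inv)
  have hft_bdd : ∀ θ ∈ Set.Icc (-Real.pi) Real.pi, ‖f θ / ((‖f θ‖ : ℝ) : ℂ)‖ ≤ 1 := by
    intro θ hθ
    have h1 := hlow θ hθ
    rw [norm_div, Complex.norm_real, Real.norm_eq_abs,
      _root_.abs_of_nonneg (norm_nonneg _), div_self (ne_of_gt (lt_of_lt_of_le hδ h1))]
  constructor
  · -- operator norms are uniformly bounded, hence o(n)
    have hbound : ∀ n : ℕ,
        ‖Matrix.toEuclideanCLM (𝕜 := ℂ)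
            ((toeplitzC n fun θ => (‖f θ‖ : ℂ))⁻¹ * (exchangeC n * toeplitzC n f) -
              exchangeC n * toeplitzC n fun θ => f θ / (‖f θ‖ : ℂ))‖ ≤ δ⁻¹ * C + 1 := by
      intro n
      rw [map_sub, _root_.map_mul, _root_.map_mul, _root_.map_mul]
      refine le_trans (norm_sub_le _ _) ?_
      have hA : ‖Matrix.toEuclideanCLM (𝕜 := ℂ) (toeplitzC n f)‖ ≤ C :=
        toeplitz_opnorm hmeas (le_of_lt hCpos) hC
      have hAt : ‖Matrix.toEuclideanCLM (𝕜 := ℂ)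
          (toeplitzC n fun θ => f θ / (‖f θ‖ : ℂ))‖ ≤ 1 :=
        toeplitz_opnorm hft_meas zero_le_one hft_bdd
      have hY : ‖Matrix.toEuclideanCLM (𝕜 := ℂ) (exchangeC n)‖ ≤ 1 := exchange_opnorm
      have hB : ‖Matrix.toEuclideanCLM (𝕜 := ℂ)
          (toeplitzC n fun θ => (‖f θ‖ : ℂ))⁻¹‖ ≤ δ⁻¹ :=
        absToeplitz_inv_opnorm hmeas hδ hC hlow
      have h1 : ‖Matrix.toEuclideanCLM (𝕜 := ℂ) (toeplitzC n fun θ => (‖f θ‖ : ℂ))⁻¹ *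
          (Matrix.toEuclideanCLM (𝕜 := ℂ) (exchangeC n) *
            Matrix.toEuclideanCLM (𝕜 := ℂ) (toeplitzC n f))‖ ≤ δ⁻¹ * C := by
        refine le_trans (norm_mul_le _ _) ?_
        have h2 : ‖Matrix.toEuclideanCLM (𝕜 := ℂ) (exchangeC n) *
            Matrix.toEuclideanCLM (𝕜 := ℂ) (toeplitzC n f)‖ ≤ C := by
          refine le_trans (norm_mul_le _ _) ?_
          calc ‖Matrix.toEuclideanCLM (𝕜 := ℂ) (exchangeC n)‖ *
              ‖Matrix.toEuclideanCLM (𝕜 := ℂ) (toeplitzC n f)‖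
              ≤ 1 * C := mul_le_mul hY hA (norm_nonneg _) zero_le_one
            _ = C := one_mul C
        exact mul_le_mul hB h2 (norm_nonneg _) (by positivity)
      have h3 : ‖Matrix.toEuclideanCLM (𝕜 := ℂ) (exchangeC n) *
          Matrix.toEuclideanCLM (𝕜 := ℂ) (toeplitzC n fun θ => f θ / (‖f θ‖ : ℂ))‖ ≤ 1 := by
        refine le_trans (norm_mul_le _ _) ?_
        calc ‖Matrix.toEuclideanCLM (𝕜 := ℂ) (exchangeC n)‖ *
            ‖Matrix.toEuclideanCLM (𝕜 := ℂ) (toeplitzC n fun θ => f θ / (‖f θ‖ : ℂ))‖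
            ≤ 1 * 1 := mul_le_mul hY hAt (norm_nonneg _) zero_le_one
          _ = 1 := one_mul 1
      linarith
    apply squeeze_zero (g := fun n : ℕ => (δ⁻¹ * C + 1) / (n : ℝ))
      (fun n => by positivity) ?_ (tendsto_const_div_atTop_nhds_zero_nat _)
    intro n
    rcases Nat.eq_zero_or_pos n with h0 | hn
    · subst h0
      simp only [Nat.cast_zero, div_zero]
      positivity
    · have hn' : (0:ℝ) < (n:ℝ) := by exact_mod_cast hn
      exact (div_le_div_iff_of_pos_right hn').mpr (hbound n)
  · -- spectrum part
    intro n μ hμ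
    have hsymm := ae_symm hmeas hC (fCoeff_real hreal)
    have hconj := fCoeff_ftilde_real hδ hlow hsymm
    have hherm := herm (n := n) hconj
    refine spectrum_bound hherm ?_ hμ
    intro v
    rw [← Matrix.mulVec_mulVec, exchange_mulVec]
    have hre : star v ⬝ᵥ (fun j => ((toeplitzC n fun θ => f θ / (‖f θ‖ : ℂ)) *ᵥ v) j.rev) =
        star (fun j : Fin n => v j.rev) ⬝ᵥ ((toeplitzC n fun θ => f θ / (‖f θ‖ : ℂ)) *ᵥ v) := by
      rw [dotProduct, dotProduct]
      refine Fintype.sum_equiv Fin.revPerm _ _ fun j => ?_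
      simp only [Pi.star_apply, Fin.revPerm_apply, Fin.rev_rev]
    rw [hre]
    have hb := dot_bound hft_meas zero_le_one hft_bdd (fun j => v j.rev) v
    rw [one_mul, S_rev] at hb
    refine le_trans hb (le_of_eq (Real.mul_self_sqrt (S_nonneg v)))
end

section
/- Let f : [−π,π] → ℂ be in the Wiener class (i.e., f(θ) = Σ_{k=−∞}^{∞} a_k e^{−ikθ} with Σ_{k=−∞}^{∞} |a_k| < ∞) and let A_n(f) ∈ ℝ^{n×n} be the Toeplitz matrix generated by f. Let C_n^{(S)} denote the Strang circulant preconditioner for A_n(f) and |C_n^{(S)}| its absolute value circulant. Then for each fixed index j, the j-th eigenvalue of |C_n^{(S)}| (in the Fourier ordering) converges to |f(2πj/n)| as n → ∞; that is, |C_n^{(S)}| → C_n(|f|) as n → ∞. -/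
open MeasureTheory Matrix Filter

lemma norm_term (a : ℤ → ℂ) (k : ℤ) (θ : ℝ) :
    ‖a k * Complex.exp (-Complex.I * k * θ)‖ = ‖a k‖ := by
  rw [norm_mul, Complex.norm_exp]
  have : (-Complex.I * k * θ).re = 0 := by simp
  rw [this, Real.exp_zero, mul_one]

/-- Let `f` be in the Wiener class, i.e. `f θ = ∑_{k ∈ ℤ} a_k e^{-ikθ}` with
`∑ |a_k| < ∞`, and suppose the Toeplitz matrices `A_n(f)` are real (the `a_k` are real). For odd
`n = 2m+1`, the `j`-th eigenvalue of the absolute value Strang circulant `|C_n^{(S)}|` is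
`|(D_m ⋆ f)(2πj/n)| = |∑_{k=-m}^m a_k e^{-ik·2πj/n}|`, and the `j`-th eigenvalue of `C_n(|f|)`
is `|f(2πj/n)|`. The theorem asserts `|C_n^{(S)}| → C_n(|f|)` as `n → ∞`: every eigenvalue of the
former approaches the corresponding eigenvalue of the latter. -/
theorem stmt6 (a : ℤ → ℂ) (f : ℝ → ℂ)
    (hsum : Summable fun k : ℤ => ‖a k‖)
    (hf : ∀ θ : ℝ, HasSum (fun k : ℤ => a k * Complex.exp (-Complex.I * k * θ)) (f θ))
    (hreal : ∀ k : ℤ, (a k).im = 0) :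
    ∀ ε > (0 : ℝ), ∃ N : ℕ, ∀ m ≥ N, ∀ j : Fin (2 * m + 1),
      |‖∑ k ∈ Finset.Icc (-(m : ℤ)) (m : ℤ),
            a k * Complex.exp (-Complex.I * k *
              ((2 * Real.pi * (j : ℕ) / (2 * m + 1) : ℝ) : ℂ))‖ -
          ‖f (2 * Real.pi * (j : ℕ) / (2 * m + 1))‖| < ε := by
  intro ε hε
  -- the tail sums over complements of Icc tend to zero
  have hIcc : Tendsto (fun m : ℕ => Finset.Icc (-(m : ℤ)) (m : ℤ)) atTop atTop := by
    apply Filter.tendsto_atTop_finset_of_monotone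
    · intro m n hmn
      apply Finset.Icc_subset_Icc <;> omega
    · intro k
      exact ⟨k.natAbs, Finset.mem_Icc.mpr ⟨by omega, by omega⟩⟩
  have htail : Tendsto (fun m : ℕ =>
      ∑' k : {k : ℤ // k ∉ Finset.Icc (-(m : ℤ)) (m : ℤ)}, ‖a k‖) atTop (nhds 0) :=
    (tendsto_tsum_compl_atTop_zero (fun k : ℤ => ‖a k‖)).comp hIcc
  rw [Metric.tendsto_atTop] at htail
  obtain ⟨N, hN⟩ := htail ε hε
  refine ⟨N, fun m hm j => ?_⟩
  set θ := (2 * Real.pi * (j : ℕ) / (2 * m + 1) : ℝ)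
  set s := Finset.Icc (-(m : ℤ)) (m : ℤ)
  have hsummable : Summable fun k : ℤ => a k * Complex.exp (-Complex.I * k * θ) := by
    apply Summable.of_norm
    exact hsum.congr fun k => (norm_term a k θ).symm
  have hsub : ∑ k ∈ s, a k * Complex.exp (-Complex.I * k * θ) +
      ∑' k : {k : ℤ // k ∉ s}, a k * Complex.exp (-Complex.I * k * θ) = f θ := by
    rw [Summable.sum_add_tsum_subtype_compl hsummable s, (hf θ).tsum_eq]
  have hbound : |‖∑ k ∈ s, a k * Complex.exp (-Complex.I * k * θ)‖ - ‖f θ‖| ≤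
      ∑' k : {k : ℤ // k ∉ s}, ‖a k‖ := by
    calc |‖∑ k ∈ s, a k * Complex.exp (-Complex.I * k * θ)‖ - ‖f θ‖|
        ≤ ‖∑ k ∈ s, a k * Complex.exp (-Complex.I * k * θ) - f θ‖ :=
          abs_norm_sub_norm_le _ _
      _ = ‖∑' k : {k : ℤ // k ∉ s}, a k * Complex.exp (-Complex.I * k * θ)‖ := by
          have h2 : ∑ k ∈ s, a k * Complex.exp (-Complex.I * k * θ) - f θ =
              -(∑' k : {k : ℤ // k ∉ s}, a k * Complex.exp (-Complex.I * k * θ)) := by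
            rw [← hsub]; ring
          rw [h2, norm_neg]
      _ ≤ ∑' k : {k : ℤ // k ∉ s}, ‖a k * Complex.exp (-Complex.I * k * θ)‖ :=
          norm_tsum_le_tsum_norm (hsum.subtype _ |>.congr fun k =>
            (norm_term a k θ).symm)
      _ = ∑' k : {k : ℤ // k ∉ s}, ‖a k‖ := by
          exact tsum_congr fun k => norm_term a k θ
  have := hN m hm
  rw [Real.dist_eq, sub_zero] at this
  have htail_nonneg : 0 ≤ ∑' k : {k : ℤ // k ∉ s}, ‖a k‖ :=
    tsum_nonneg fun _ => norm_nonneg _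
  calc |‖∑ k ∈ s, a k * Complex.exp (-Complex.I * k * θ)‖ - ‖f θ‖|
      ≤ ∑' k : {k : ℤ // k ∉ s}, ‖a k‖ := hbound
    _ < ε := by rwa [abs_of_nonneg htail_nonneg] at this
end
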